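/- arXiv:1707.09277 — 5 statements merged into one kernel-verified Lean document; each statement's English description precedes it below -/
import Mathlib

section
/- Let d ≥ 1, ϑ ∈ (0, π/2], and let Γ be a ϑ-bounded configuration on ℝ^d. Then for every connected open set U ⊂ ℝ^d and any two points x, y ∈ U, x and y lie in the same connected component of the undirected graph G_U(Γ): there exists a finite sequence x = z₀, z₁, …, z_N = y of points of ℝ^d such that for each i < N either (z_i ∈ U and z_{i+1} ∈ z_i + Γ(z_i)) or (z_{i+1} ∈ U and z_i ∈ z_{i+1} + Γ(z_{i+1})). -/
open MeasureTheory Metric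
open scoped ENNReal

noncomputable section

/-- `d`-dimensional Euclidean space. -/
abbrev Euc (d : ℕ) : Type := EuclideanSpace ℝ (Fin d)

/-- The open cone `Ṽ(v,θ)` with axis `v` and apex angle `θ`. -/
def coneSet (d : ℕ) (v : Euc d) (θ : ℝ) : Set (Euc d) :=
  {h | h ≠ 0 ∧ Real.cos θ < (inner ℝ v h : ℝ) / ‖h‖}

/-- The double cone `V(v,θ) = Ṽ(v,θ) ∪ (−Ṽ(v,θ))`. -/
def doubleCone (d : ℕ) (v : Euc d) (θ : ℝ) : Set (Euc d) :=
  {h | h ∈ coneSet d v θ ∨ -h ∈ coneSet d v θ}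

/-- A configuration assigns to each point of `ℝ^d` a double cone with apex at `0`,
recorded via its (unit) symmetry axis and its apex angle in `(0, π/2]`. -/
structure Config (d : ℕ) where
  axis : Euc d → Euc d
  angle : Euc d → ℝ
  axis_norm : ∀ x, ‖axis x‖ = 1
  angle_mem : ∀ x, angle x ∈ Set.Ioc 0 (Real.pi / 2)

/-- The double cone `Γ(x)` assigned to `x` by a configuration `Γ`. -/
def Config.cone {d : ℕ} (Γ : Config d) (x : Euc d) : Set (Euc d) :=
  doubleCone d (Γ.axis x) (Γ.angle x)

/-- `Γ` is `ϑ`-bounded: every apex angle is at least `ϑ`. -/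
def Config.Bounded {d : ℕ} (Γ : Config d) (ϑ : ℝ) : Prop :=
  ∀ x, ϑ ≤ Γ.angle x

/-- `Γ` is `ϑ`-admissible: `ϑ`-bounded and `{(x,y) | y - x ∈ Γ(x)}` is Borel. -/
def Config.Admissible {d : ℕ} (Γ : Config d) (ϑ : ℝ) : Prop :=
  Γ.Bounded ϑ ∧ MeasurableSet {p : Euc d × Euc d | p.2 - p.1 ∈ Γ.cone p.1}

/-- The indicator sum `𝟙_{V^Γ[x]}(y) + 𝟙_{V^Γ[y]}(x)`, valued in `ℝ≥0∞`. -/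
def indSum {d : ℕ} (Γ : Config d) (x y : Euc d) : ℝ≥0∞ :=
  (Γ.cone x).indicator (fun _ => (1 : ℝ≥0∞)) (y - x) +
  (Γ.cone y).indicator (fun _ => (1 : ℝ≥0∞)) (x - y)

/-- The kernel `|x - y| ^ (-d-α)` as an `ℝ≥0∞`-valued function (equal to `∞` on the diagonal). -/
def stbl (d : ℕ) (α : ℝ) (x y : Euc d) : ℝ≥0∞ :=
  (ENNReal.ofReal (dist x y)) ^ (-(d : ℝ) - α)

/-- The embedding of the integer lattice `ℤ^d` into `ℝ^d`. -/
def latt (d : ℕ) (z : Fin d → ℤ) : Euc d :=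
  (WithLp.equiv 2 (Fin d → ℝ)).symm (fun i => (z i : ℝ))

/-- The open cube `A_h(u)` of side length `h` centered at `u` (w.r.t. the max norm). -/
def cube (d : ℕ) (h : ℝ) (u : Euc d) : Set (Euc d) :=
  {x | ∀ i, |x i - u i| < h / 2}

/-- The translate `V[x] = V + x` of a set `V`. -/
def shiftSet (d : ℕ) (V : Set (Euc d)) (x : Euc d) : Set (Euc d) :=
  {y | y - x ∈ V}

/-- The "half-set" `V_r = {y ∈ V | closedBall y r ⊆ V}` (double half-cone for `V` a double cone). -/
def halfSet (d : ℕ) (V : Set (Euc d)) (r : ℝ) : Set (Euc d) :=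
  {y | y ∈ V ∧ Metric.closedBall y r ⊆ V}

/-- Adjacency of `w` and `z` in the (undirected) graph `G_U(Γ)`. -/
def adjIn (d : ℕ) (Γ : Config d) (U : Set (Euc d)) (w z : Euc d) : Prop :=
  (w ∈ U ∧ z - w ∈ Γ.cone w) ∨ (z ∈ U ∧ w - z ∈ Γ.cone z)

/-- Adjacency of two lattice points in the graph `G(Γ)`. -/
def adjL (d : ℕ) (Γ : Config d) (w z : Fin d → ℤ) : Prop :=
  latt d z - latt d w ∈ Γ.cone (latt d w) ∨ latt d w - latt d z ∈ Γ.cone (latt d z)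

/-- A lattice point `x` is `r`-`R`-connected if every lattice point within distance `r`
is connected to `x` by an undirected edge path in `G(Γ)` staying in the closed `R`-ball
around `x`. -/
def rRConnected (d : ℕ) (Γ : Config d) (r R : ℝ) (x : Fin d → ℤ) : Prop :=
  ∀ y : Fin d → ℤ, dist (latt d y) (latt d x) ≤ r →
    ∃ (N : ℕ) (p : ℕ → Fin d → ℤ), p 0 = x ∧ p N = y ∧
      (∀ i < N, adjL d Γ (p i) (p (i + 1))) ∧
      ∀ i ≤ N, dist (latt d (p i)) (latt d x) ≤ R

/-- Sum over pairs of lattice points satisfying a predicate `P` of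
`(f x - f y)² K x y`, valued in `ℝ≥0∞`. -/
def dSum (d : ℕ) (f : (Fin d → ℤ) → ℝ) (K : (Fin d → ℤ) → (Fin d → ℤ) → ℝ≥0∞)
    (P : (Fin d → ℤ) → (Fin d → ℤ) → Prop) : ℝ≥0∞ :=
  ∑' q : (Fin d → ℤ) × (Fin d → ℤ),
    Set.indicator {q : (Fin d → ℤ) × (Fin d → ℤ) | P q.1 q.2}
      (fun q => ENNReal.ofReal ((f q.1 - f q.2) ^ 2) * K q.1 q.2) q

/-! ### Auxiliary lemmas -/

section ConeLemmas

variable {d : ℕ}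

lemma mem_coneSet_iff {v h : Euc d} {θ : ℝ} :
    h ∈ coneSet d v θ ↔ h ≠ 0 ∧ Real.cos θ * ‖h‖ < (inner ℝ v h : ℝ) := by
  unfold coneSet
  constructor
  · rintro ⟨h0, hlt⟩
    have hp : (0:ℝ) < ‖h‖ := norm_pos_iff.mpr h0
    refine ⟨h0, ?_⟩
    have := mul_lt_mul_of_pos_right hlt hp
    rwa [div_mul_cancel₀] at this
    exact ne_of_gt hp
  · rintro ⟨h0, hlt⟩
    have hp : (0:ℝ) < ‖h‖ := norm_pos_iff.mpr h0
    exact ⟨h0, (lt_div_iff₀ hp).mpr hlt⟩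

lemma isOpen_coneSet (v : Euc d) (θ : ℝ) : IsOpen (coneSet d v θ) := by
  have : coneSet d v θ =
      {h : Euc d | h ≠ 0} ∩ {h : Euc d | Real.cos θ * ‖h‖ < (inner ℝ v h : ℝ)} := by
    ext h; simp only [Set.mem_inter_iff, Set.mem_setOf_eq]
    constructor
    · intro hh
      have := mem_coneSet_iff.mp hh
      exact ⟨this.1, this.2⟩
    · intro hh; exact mem_coneSet_iff.mpr ⟨hh.1, hh.2⟩
  rw [this]
  refine IsOpen.inter (isOpen_compl_singleton) ?_
  exact isOpen_lt (continuous_const.mul continuous_norm) (continuous_const.inner continuous_id)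

lemma isOpen_doubleCone (v : Euc d) (θ : ℝ) : IsOpen (doubleCone d v θ) := by
  have : doubleCone d v θ = coneSet d v θ ∪ (fun h : Euc d => -h) ⁻¹' (coneSet d v θ) := rfl
  rw [this]
  exact (isOpen_coneSet v θ).union ((isOpen_coneSet v θ).preimage (by fun_prop))

lemma neg_mem_doubleCone_iff {v h : Euc d} {θ : ℝ} :
    -h ∈ doubleCone d v θ ↔ h ∈ doubleCone d v θ := by
  unfold doubleCone
  simp only [Set.mem_setOf_eq, neg_neg]
  exact Or.comm

variable (Γ : Config d)

lemma cos_angle_nonneg (z : Euc d) : 0 ≤ Real.cos (Γ.angle z) := by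
  have h := Γ.angle_mem z
  refine Real.cos_nonneg_of_mem_Icc ⟨?_, h.2⟩
  have := Real.pi_pos
  linarith [h.1.le]

lemma cos_angle_lt_one (z : Euc d) : Real.cos (Γ.angle z) < 1 := by
  have h := Γ.angle_mem z
  have hπ := Real.pi_pos
  have : Real.cos (Γ.angle z) < Real.cos 0 := by
    refine Real.strictAntiOn_cos ⟨le_rfl, Real.pi_pos.le⟩ ⟨h.1.le, by linarith [h.2]⟩ h.1
  simpa using this

/-- Nonzero multiples of the axis belong to the double cone. -/
lemma smul_axis_mem_cone (z : Euc d) {a : ℝ} (ha : a ≠ 0) : a • Γ.axis z ∈ Γ.cone z := by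
  have hv : ‖Γ.axis z‖ = 1 := Γ.axis_norm z
  have hcos : Real.cos (Γ.angle z) < 1 := cos_angle_lt_one Γ z
  have key : ∀ b : ℝ, 0 < b → b • Γ.axis z ∈ coneSet d (Γ.axis z) (Γ.angle z) := by
    intro b hb
    refine mem_coneSet_iff.mpr ⟨?_, ?_⟩
    · simp only [ne_eq, smul_eq_zero, not_or]
      refine ⟨ne_of_gt hb, ?_⟩
      intro h0; rw [h0] at hv; simp at hv
    · rw [norm_smul, real_inner_smul_right, real_inner_self_eq_norm_sq]
      rw [hv]
      simp only [Real.norm_eq_abs, abs_of_pos hb, mul_one, one_pow]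
      calc Real.cos (Γ.angle z) * b < 1 * b := by
            exact mul_lt_mul_of_pos_right hcos hb
        _ = b := one_mul b
  rcases lt_or_gt_of_ne ha with h | h
  · right
    have : -(a • Γ.axis z) = (-a) • Γ.axis z := by rw [neg_smul]
    rw [this]
    exact key (-a) (by linarith)
  · left; exact key a h

/-- A perturbed multiple of the axis lies in the double cone. -/
lemma perturb_mem_cone (z : Euc d) {b : ℝ} (e : Euc d) (hb : b ≠ 0)
    (he : ‖e‖ * (1 + Real.cos (Γ.angle z)) < |b| * (1 - Real.cos (Γ.angle z))) :
    b • Γ.axis z + e ∈ Γ.cone z := by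
  have hv : ‖Γ.axis z‖ = 1 := Γ.axis_norm z
  have hcos0 : 0 ≤ Real.cos (Γ.angle z) := cos_angle_nonneg Γ z
  have hcos1 : Real.cos (Γ.angle z) < 1 := cos_angle_lt_one Γ z
  have key : ∀ c : ℝ, 0 < c → ∀ g : Euc d,
      ‖g‖ * (1 + Real.cos (Γ.angle z)) < c * (1 - Real.cos (Γ.angle z)) →
      c • Γ.axis z + g ∈ coneSet d (Γ.axis z) (Γ.angle z) := by
    intro c hc g hg
    set w := Γ.axis z
    have hgc : ‖g‖ < c := by nlinarith [norm_nonneg g]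
    have hinner : c - ‖g‖ ≤ (inner ℝ w (c • w + g) : ℝ) := by
      rw [inner_add_right, real_inner_smul_right, real_inner_self_eq_norm_sq, hv]
      have : |(inner ℝ w g : ℝ)| ≤ ‖g‖ := by
        calc |(inner ℝ w g : ℝ)| ≤ ‖w‖ * ‖g‖ := abs_real_inner_le_norm w g
          _ = ‖g‖ := by rw [hv, one_mul]
      nlinarith [abs_le.mp this]
    have hnorm : ‖c • w + g‖ ≤ c + ‖g‖ := by
      calc ‖c • w + g‖ ≤ ‖c • w‖ + ‖g‖ := norm_add_le _ _
        _ = c + ‖g‖ := by rw [norm_smul, hv, Real.norm_eq_abs, abs_of_pos hc, mul_one]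
    refine mem_coneSet_iff.mpr ⟨?_, ?_⟩
    · intro h0
      have : (inner ℝ w (c • w + g) : ℝ) = 0 := by rw [h0, inner_zero_right]
      nlinarith
    · calc Real.cos (Γ.angle z) * ‖c • w + g‖ ≤ Real.cos (Γ.angle z) * (c + ‖g‖) := by
            exact mul_le_mul_of_nonneg_left hnorm hcos0
        _ < c - ‖g‖ := by nlinarith
        _ ≤ _ := hinner
  rcases lt_or_gt_of_ne hb with h | h
  · right
    have : -(b • Γ.axis z + e) = (-b) • Γ.axis z + (-e) := by rw [neg_add, neg_smul]
    rw [this]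
    refine key (-b) (by linarith) (-e) ?_
    rw [norm_neg]
    rwa [abs_of_neg h] at he
  · left
    refine key b h e ?_
    rwa [abs_of_pos h] at he

end ConeLemmas

section Reach

variable {d : ℕ} (Γ : Config d) (U : Set (Euc d))

/-- Reachability by an undirected edge path. -/
def reach (x z : Euc d) : Prop :=
  ∃ (N : ℕ) (p : ℕ → Euc d), p 0 = x ∧ p N = z ∧ ∀ i < N, adjIn d Γ U (p i) (p (i + 1))

lemma reach_refl (x : Euc d) : reach Γ U x x :=
  ⟨0, fun _ => x, rfl, rfl, fun i hi => absurd hi (Nat.not_lt_zero i)⟩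

lemma reach_step {x z z' : Euc d} (h : reach Γ U x z) (h' : adjIn d Γ U z z') :
    reach Γ U x z' := by
  obtain ⟨N, p, hp0, hpN, hadj⟩ := h
  refine ⟨N + 1, fun i => if i ≤ N then p i else z', ?_, ?_, ?_⟩
  · show (if 0 ≤ N then p 0 else z') = x
    rw [if_pos (Nat.zero_le N)]; exact hp0
  · show (if N + 1 ≤ N then p (N + 1) else z') = z'
    rw [if_neg (by omega)]
  · intro i hi
    show adjIn d Γ U (if i ≤ N then p i else z') (if i + 1 ≤ N then p (i + 1) else z')
    by_cases h1 : i < N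
    · rw [if_pos (by omega : i ≤ N), if_pos (by omega : i + 1 ≤ N)]
      exact hadj i h1
    · have hiN : i = N := by omega
      subst hiN
      rw [if_pos le_rfl, if_neg (by omega), hpN]
      exact h'

lemma adjIn_symm {w z : Euc d} (h : adjIn d Γ U w z) : adjIn d Γ U z w := Or.symm h

end Reach

section EdgeLemmas

variable {d : ℕ} {Γ : Config d} {U : Set (Euc d)}

/-- Common-direction two-step link: if the axes of `x` and `y` are sufficiently aligned,
then `x` and `y` are joined by a path of length two through a far-away midpoint. -/
lemma link_of_axes_aligned {x y : Euc d} (hx : x ∈ U) (hy : y ∈ U)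
    (h : Real.cos (Γ.angle y) < |(inner ℝ (Γ.axis x) (Γ.axis y) : ℝ)|) :
    ∃ m, adjIn d Γ U x m ∧ adjIn d Γ U m y := by
  set v := Γ.axis x
  set w := Γ.axis y
  set c : Euc d := y - x with hc
  set γ : ℝ := |(inner ℝ v w : ℝ)| - Real.cos (Γ.angle y) with hγ
  have hγpos : 0 < γ := by simp only [hγ]; linarith
  set R : ℝ := (2 * ‖c‖ + 1) / γ with hR
  have hRpos : 0 < R := by positivity
  set σ : ℝ := if 0 ≤ (inner ℝ v w : ℝ) then 1 else -1 with hσ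
  have hσvw : σ * (inner ℝ v w : ℝ) = |(inner ℝ v w : ℝ)| := by
    rcases le_or_gt 0 ((inner ℝ v w : ℝ)) with h1 | h1
    · rw [hσ, if_pos h1, one_mul, abs_of_nonneg h1]
    · rw [hσ, if_neg (not_le.mpr h1), abs_of_neg h1]; ring
  refine ⟨x + (σ * R) • v, ?_, ?_⟩
  · left
    refine ⟨hx, ?_⟩
    have : x + (σ * R) • v - x = (σ * R) • v := by abel
    rw [this]
    refine smul_axis_mem_cone Γ x ?_
    intro h0
    rcases mul_eq_zero.mp h0 with h1 | h1
    · rw [hσ] at h1; split_ifs at h1 <;> norm_num at h1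
    · exact (ne_of_gt hRpos) h1
  · right
    refine ⟨hy, ?_⟩
    set m : Euc d := x + (σ * R) • v
    have hmy : m - y = (σ * R) • v - c := by simp only [m, hc]; abel
    have hw1 : ‖w‖ = 1 := Γ.axis_norm y
    have hv1 : ‖v‖ = 1 := Γ.axis_norm x
    have hinner : R * |(inner ℝ v w : ℝ)| - ‖c‖ ≤ (inner ℝ w (m - y) : ℝ) := by
      rw [hmy, inner_sub_right, real_inner_smul_right]
      have h1 : (inner ℝ w v : ℝ) = (inner ℝ v w : ℝ) := (real_inner_comm w v).symm
      have h2 : |(inner ℝ w c : ℝ)| ≤ ‖c‖ := by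
        calc |(inner ℝ w c : ℝ)| ≤ ‖w‖ * ‖c‖ := abs_real_inner_le_norm w c
          _ = ‖c‖ := by rw [hw1, one_mul]
      have h3 : σ * R * (inner ℝ w v : ℝ) = R * |(inner ℝ v w : ℝ)| := by
        rw [h1, mul_comm σ R, mul_assoc, hσvw]
      rw [h3]
      nlinarith [abs_le.mp h2]
    have hnorm : ‖m - y‖ ≤ R + ‖c‖ := by
      rw [hmy]
      calc ‖(σ * R) • v - c‖ ≤ ‖(σ * R) • v‖ + ‖c‖ := norm_sub_le _ _
        _ = |σ * R| * 1 + ‖c‖ := by rw [norm_smul, hv1, Real.norm_eq_abs]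
        _ = R + ‖c‖ := by
            have : |σ * R| = R := by
              rw [abs_mul]
              have : |σ| = 1 := by rw [hσ]; split_ifs <;> simp
              rw [this, one_mul, abs_of_pos hRpos]
            rw [this]; ring
    have hcosy0 : 0 ≤ Real.cos (Γ.angle y) := cos_angle_nonneg Γ y
    have hkey : Real.cos (Γ.angle y) * ‖m - y‖ < (inner ℝ w (m - y) : ℝ) := by
      have hRγ : R * γ = 2 * ‖c‖ + 1 := by
        rw [hR]; field_simp
      calc Real.cos (Γ.angle y) * ‖m - y‖ ≤ Real.cos (Γ.angle y) * (R + ‖c‖) := by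
            exact mul_le_mul_of_nonneg_left hnorm hcosy0
        _ < R * |(inner ℝ v w : ℝ)| - ‖c‖ := by
            have hcos1 : Real.cos (Γ.angle y) < 1 := cos_angle_lt_one Γ y
            nlinarith [norm_nonneg c]
        _ ≤ (inner ℝ w (m - y) : ℝ) := hinner
    left
    refine mem_coneSet_iff.mpr ⟨?_, hkey⟩
    intro h0
    rw [h0] at hkey
    simp only [inner_zero_right, norm_zero, mul_zero] at hkey
    exact lt_irrefl 0 hkey

set_option maxHeartbeats 1000000 in
/-- Near-span link: if `y - x` is well approximated by a combination of the two axes,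
then `x` and `y` are adjacent or joined by a path of length two. -/
lemma link_of_near_span {ϑ : ℝ} (hϑ : Γ.Bounded ϑ) (hϑ2 : ϑ ∈ Set.Ioc 0 (Real.pi / 2))
    {x y : Euc d} (hx : x ∈ U) (hy : y ∈ U) (hxy : x ≠ y) {a b : ℝ}
    (h : ‖(y - x) - a • Γ.axis x - b • Γ.axis y‖ * 8 < (1 - Real.cos ϑ) * (|a| + |b|)) :
    adjIn d Γ U x y ∨ ∃ m, adjIn d Γ U x m ∧ adjIn d Γ U m y := by
  set v := Γ.axis x
  set w := Γ.axis y
  set c : Euc d := y - x with hc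
  set e : Euc d := c - a • v - b • w with he
  set Δ : ℝ := 1 - Real.cos ϑ with hΔ
  have hcosθx : Real.cos (Γ.angle x) ≤ Real.cos ϑ := by
    have h1 := hϑ x; have h2 := (Γ.angle_mem x).2; have h3 := hϑ2.1
    have hπ := Real.pi_pos
    refine Real.strictAntiOn_cos.le_iff_ge ?_ ?_ |>.mpr h1 <;>
      constructor <;> linarith
  have hcosθy : Real.cos (Γ.angle y) ≤ Real.cos ϑ := by
    have h1 := hϑ y; have h2 := (Γ.angle_mem y).2; have h3 := hϑ2.1
    have hπ := Real.pi_pos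
    refine Real.strictAntiOn_cos.le_iff_ge ?_ ?_ |>.mpr h1 <;>
      constructor <;> linarith
  have hΔx : Δ ≤ 1 - Real.cos (Γ.angle x) := by simp only [hΔ]; linarith
  have hΔy : Δ ≤ 1 - Real.cos (Γ.angle y) := by simp only [hΔ]; linarith
  have hcy0 : 0 ≤ Real.cos (Γ.angle y) := cos_angle_nonneg Γ y
  have hcx0 : 0 ≤ Real.cos (Γ.angle x) := cos_angle_nonneg Γ x
  rcases le_or_gt (|a|) (|b|) with hab | hab
  · -- |a| ≤ |b|, use the cone of `y`
    have hb8 : ‖e‖ * 8 < Δ * (2 * |b|) := by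
      calc ‖e‖ * 8 < Δ * (|a| + |b|) := h
        _ ≤ Δ * (2 * |b|) := by
            have hΔpos : 0 ≤ Δ := by
              simp only [hΔ]; linarith [Real.cos_le_one ϑ]
            nlinarith
    have hbne : b ≠ 0 := by
      intro h0
      rw [h0] at hb8
      simp only [abs_zero, mul_zero] at hb8
      nlinarith [norm_nonneg e]
    have hecone : ‖-e‖ * (1 + Real.cos (Γ.angle y)) < |(-b)| * (1 - Real.cos (Γ.angle y)) := by
      rw [norm_neg, abs_neg]
      have hcy1 : Real.cos (Γ.angle y) < 1 := cos_angle_lt_one Γ y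
      have h1 : ‖e‖ * (1 + Real.cos (Γ.angle y)) ≤ ‖e‖ * 2 := by
        nlinarith [norm_nonneg e]
      have h2 : Δ * (2 * |b|) ≤ (1 - Real.cos (Γ.angle y)) * (2 * |b|) := by
        nlinarith [abs_nonneg b]
      have hbpos : 0 < |b| := abs_pos.mpr hbne
      have hPnn : 0 ≤ (1 - Real.cos (Γ.angle y)) * |b| := by nlinarith
      nlinarith [hPnn]
    rcases eq_or_ne a 0 with ha0 | ha0
    · -- direct edge from the `y` side
      left; right
      refine ⟨hy, ?_⟩
      have : x - y = (-b) • w + (-e) := by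
        simp only [he, hc, ha0, zero_smul, neg_smul]
        abel
      rw [this]
      exact perturb_mem_cone Γ y (-e) (neg_ne_zero.mpr hbne) hecone
    · -- two-step through m = x + a • v
      right
      refine ⟨x + a • v, ?_, ?_⟩
      · left
        refine ⟨hx, ?_⟩
        have : x + a • v - x = a • v := by abel
        rw [this]
        exact smul_axis_mem_cone Γ x ha0
      · right
        refine ⟨hy, ?_⟩
        have : x + a • v - y = (-b) • w + (-e) := by
          simp only [he, hc, neg_smul]
          abel
        rw [this]
        exact perturb_mem_cone Γ y (-e) (neg_ne_zero.mpr hbne) hecone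
  · -- |b| < |a|, use the cone of `x`
    have ha8 : ‖e‖ * 8 < Δ * (2 * |a|) := by
      calc ‖e‖ * 8 < Δ * (|a| + |b|) := h
        _ ≤ Δ * (2 * |a|) := by
            have hΔpos : 0 ≤ Δ := by
              simp only [hΔ]; linarith [Real.cos_le_one ϑ]
            nlinarith
    have hane : a ≠ 0 := by
      intro h0
      rw [h0] at ha8
      simp only [abs_zero, mul_zero] at ha8
      nlinarith [norm_nonneg e]
    have hecone : ‖e‖ * (1 + Real.cos (Γ.angle x)) < |a| * (1 - Real.cos (Γ.angle x)) := by
      have hcx1 : Real.cos (Γ.angle x) < 1 := cos_angle_lt_one Γ x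
      have h1 : ‖e‖ * (1 + Real.cos (Γ.angle x)) ≤ ‖e‖ * 2 := by
        nlinarith [norm_nonneg e]
      have h2 : Δ * (2 * |a|) ≤ (1 - Real.cos (Γ.angle x)) * (2 * |a|) := by
        nlinarith [abs_nonneg a]
      have hapos : 0 < |a| := abs_pos.mpr hane
      have hPnn : 0 ≤ (1 - Real.cos (Γ.angle x)) * |a| := by nlinarith
      nlinarith [hPnn]
    rcases eq_or_ne b 0 with hb0 | hb0
    · -- direct edge from the `x` side
      left; left
      refine ⟨hx, ?_⟩
      have : y - x = a • v + e := by
        simp only [he, hc, hb0, zero_smul]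
        abel
      rw [this]
      exact perturb_mem_cone Γ x e hane hecone
    · -- two-step through m = y + (-b) • w
      right
      refine ⟨y + (-b) • w, ?_, ?_⟩
      · left
        refine ⟨hx, ?_⟩
        have : y + (-b) • w - x = a • v + e := by
          simp only [he, hc, neg_smul]
          abel
        rw [this]
        exact perturb_mem_cone Γ x e hane hecone
      · right
        refine ⟨hy, ?_⟩
        have : y + (-b) • w - y = (-b) • w := by abel
        rw [this]
        exact smul_axis_mem_cone Γ y (neg_ne_zero.mpr hb0)

end EdgeLemmas

section Projection

variable {d : ℕ}

/-- Gram–Schmidt orthonormalization of `f` against a unit vector `e`. -/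
def gsOrth (e f : Euc d) : Euc d :=
  (Real.sqrt (1 - (inner ℝ e f : ℝ) ^ 2))⁻¹ • (f - (inner ℝ e f : ℝ) • e)

/-- Orthogonal projection onto the complement of `span {e, f}` (when `e, f` are
unit and non-parallel). -/
def projPerp (e f C : Euc d) : Euc d :=
  C - (inner ℝ e C : ℝ) • e - (inner ℝ (gsOrth e f) C : ℝ) • gsOrth e f

lemma gsOrth_facts {e f : Euc d} (he : ‖e‖ = 1) (hf : ‖f‖ = 1)
    (hg : |(inner ℝ e f : ℝ)| < 1) :
    ‖gsOrth e f‖ = 1 ∧ (inner ℝ e (gsOrth e f) : ℝ) = 0 := by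
  set g : ℝ := (inner ℝ e f : ℝ) with hgdef
  have hs2 : 0 < 1 - g ^ 2 := by nlinarith [abs_nonneg g, sq_abs g, abs_le.mp hg.le]
  set s : ℝ := Real.sqrt (1 - g ^ 2) with hsdef
  have hspos : 0 < s := Real.sqrt_pos.mpr hs2
  have hfe : (inner ℝ f e : ℝ) = g := by rw [hgdef]; exact (real_inner_comm f e).symm
  have hnorm2 : ‖f - g • e‖ ^ 2 = 1 - g ^ 2 := by
    rw [norm_sub_sq_real, real_inner_smul_right, norm_smul, hf, he, Real.norm_eq_abs]
    rw [hfe, mul_pow, sq_abs]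
    ring
  have hnorm : ‖f - g • e‖ = s := by
    rw [hsdef, ← hnorm2]
    rw [Real.sqrt_sq (norm_nonneg _)]
  constructor
  · rw [gsOrth, ← hgdef, ← hsdef, norm_smul, hnorm, Real.norm_eq_abs,
      abs_of_pos (inv_pos.mpr hspos)]
    field_simp
  · rw [gsOrth, ← hgdef, ← hsdef, real_inner_smul_right, inner_sub_right,
      real_inner_smul_right, real_inner_self_eq_norm_sq, he]
    have h0 : (inner ℝ e f : ℝ) - g * 1 ^ 2 = 0 := by rw [hgdef]; ring
    rw [h0, mul_zero]

lemma projPerp_sub (e f C C' : Euc d) :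
    projPerp e f (C - C') = projPerp e f C - projPerp e f C' := by
  unfold projPerp
  rw [inner_sub_right, inner_sub_right, sub_smul, sub_smul]
  abel

/-- Key quantitative bound: if `C` is `δ₁`-far (relative to coefficients) from the span
of the unit vectors `e` and `f`, then its `projPerp` component is comparable to `‖C‖`. -/
lemma projPerp_large {e f C : Euc d} (he : ‖e‖ = 1) (hf : ‖f‖ = 1)
    (hg : |(inner ℝ e f : ℝ)| < 1) {δ₁ : ℝ} (hδ : 0 < δ₁)
    (hC : ∀ a b : ℝ, δ₁ * (|a| + |b|) ≤ ‖C - a • e - b • f‖) :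
    δ₁ / (δ₁ + 2) * ‖C‖ ≤ ‖projPerp e f C‖ := by
  obtain ⟨hfb1, hefb⟩ := gsOrth_facts he hf hg
  set g : ℝ := (inner ℝ e f : ℝ) with hgdef
  have hs2 : 0 < 1 - g ^ 2 := by nlinarith [abs_nonneg g, sq_abs g, abs_le.mp hg.le]
  set s : ℝ := Real.sqrt (1 - g ^ 2) with hsdef
  have hspos : 0 < s := Real.sqrt_pos.mpr hs2
  have hs1 : s ≤ 1 := by
    rw [hsdef]
    refine Real.sqrt_le_one.mpr ?_
    nlinarith [sq_nonneg g]
  set fb : Euc d := gsOrth e f with hfbdef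
  set α : ℝ := (inner ℝ e C : ℝ) with hα
  set β : ℝ := (inner ℝ fb C : ℝ) with hβ
  set b : ℝ := β / s with hb
  set a : ℝ := α - g * (β / s) with ha
  have hcomb : a • e + b • f = α • e + β • fb := by
    have h1 : fb = s⁻¹ • (f - g • e) := by rw [hfbdef, gsOrth, ← hgdef, ← hsdef]
    have hsne : s ≠ 0 := ne_of_gt hspos
    rw [h1, ha, hb]
    match_scalars
    · field_simp
      ring
    · field_simp
  have hid : C - a • e - b • f = projPerp e f C := by
    show _ = C - (inner ℝ e C : ℝ) • e - (inner ℝ (gsOrth e f) C : ℝ) • gsOrth e f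
    rw [← hfbdef, ← hα, ← hβ]
    rw [sub_sub, sub_sub, hcomb]
  have hbound := hC a b
  rw [hid] at hbound
  have hαbound : |α| ≤ |a| + |b| := by
    have : α = a + g * b := by rw [ha, hb]; ring
    rw [this]
    calc |a + g * b| ≤ |a| + |g * b| := abs_add_le _ _
      _ ≤ |a| + |b| := by
          rw [abs_mul]
          have : |g| * |b| ≤ 1 * |b| := mul_le_mul_of_nonneg_right hg.le (abs_nonneg b)
          linarith
  have hβbound : |β| ≤ |b| := by
    have : β = b * s := by rw [hb]; field_simp
    rw [this, abs_mul, abs_of_pos hspos]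
    nlinarith [abs_nonneg b]
  have hCbound : ‖C‖ ≤ ‖projPerp e f C‖ + 2 * (|a| + |b|) := by
    have hCeq : C = projPerp e f C + α • e + β • fb := by
      show C = C - (inner ℝ e C : ℝ) • e - (inner ℝ (gsOrth e f) C : ℝ) • gsOrth e f + α • e + β • fb
      rw [← hfbdef, ← hα, ← hβ]
      abel
    calc ‖C‖ = ‖projPerp e f C + α • e + β • fb‖ := by rw [← hCeq]
      _ ≤ ‖projPerp e f C + α • e‖ + ‖β • fb‖ := norm_add_le _ _
      _ ≤ ‖projPerp e f C‖ + ‖α • e‖ + ‖β • fb‖ := by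
          linarith [norm_add_le (projPerp e f C) (α • e)]
      _ = ‖projPerp e f C‖ + |α| + |β| := by
          rw [norm_smul, norm_smul, he, hfb1, Real.norm_eq_abs, Real.norm_eq_abs,
            mul_one, mul_one]
      _ ≤ ‖projPerp e f C‖ + 2 * (|a| + |b|) := by
          have h1 : |α| + |β| ≤ (|a| + |b|) + |b| := by linarith
          have h2 : (|a| + |b|) + |b| ≤ 2 * (|a| + |b|) := by
            have := abs_nonneg a; linarith
          linarith
  rw [div_mul_eq_mul_div, div_le_iff₀ (by linarith : (0:ℝ) < δ₁ + 2)]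
  nlinarith [norm_nonneg (projPerp e f C)]

end Projection

section NullImage

open MeasureTheory
open scoped NNReal

/-- The image of a volume-null set under a Lipschitz-on map is volume-null. -/
lemma volume_image_null {d : ℕ} {N : Set (Euc d)} (hN : volume N = 0)
    {Ψ : Euc d → Euc d} {K : ℝ≥0} (hlip : LipschitzOnWith K Ψ N) :
    volume (Ψ '' N) = 0 := by
  classical
  set T := (MeasurableEquiv.toLp 2 (Fin d → ℝ)).symm with hT
  have hTcoe : ⇑T = ⇑(WithLp.equiv 2 (Fin d → ℝ)) := rfl
  have hTlip : LipschitzWith 1 (⇑T) := by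
    rw [hTcoe]; exact PiLp.lipschitzWith_ofLp 2 _
  set c : ℝ≥0 := (Fintype.card (Fin d) : ℝ≥0) ^ (1 / (2:ℝ≥0∞)).toReal with hc
  have hTslip : LipschitzWith c (⇑T.symm) := by
    intro u v
    have anti := PiLp.antilipschitzWith_ofLp 2 (fun _ : Fin d => ℝ)
    have h1 := anti (T.symm u) (T.symm v)
    have h2 : (WithLp.equiv 2 (Fin d → ℝ)) (T.symm u) = u := by
      have : ⇑T ∘ ⇑T.symm = id := by
        funext z; exact T.apply_symm_apply z
      have := congrFun this u
      simpa [hTcoe] using this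
    have h3 : (WithLp.equiv 2 (Fin d → ℝ)) (T.symm v) = v := by
      have : ⇑T ∘ ⇑T.symm = id := by
        funext z; exact T.apply_symm_apply z
      have := congrFun this v
      simpa [hTcoe] using this
    rw [show (T.symm u).ofLp = u from h2, show (T.symm v).ofLp = v from h3] at h1
    exact h1
  have hMP : MeasurePreserving (⇑T) (volume : Measure (Euc d)) volume :=
    EuclideanSpace.volume_preserving_symm_measurableEquiv_toLp (Fin d)
  have hmap : ∀ s : Set (Fin d → ℝ), (volume : Measure (Fin d → ℝ)) s
      = (volume : Measure (Euc d)) (⇑T ⁻¹' s) := by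
    intro s
    rw [← hMP.map_eq]
    exact T.measurableEmbedding.map_apply _ _
  have hvol_eq : ∀ s : Set (Euc d), (volume : Measure (Euc d)) s
      = (volume : Measure (Fin d → ℝ)) (⇑T '' s) := by
    intro s
    rw [hmap (⇑T '' s)]
    congr 1
    exact (Equiv.preimage_image T.toEquiv s).symm ▸ rfl
  have hHpi : (μH[(d : ℝ)] : Measure (Fin d → ℝ)) = volume := by
    have := MeasureTheory.hausdorffMeasure_pi_real (ι := Fin d)
    simpa [Fintype.card_fin] using this
  have hdnn : (0:ℝ) ≤ (d : ℝ) := Nat.cast_nonneg d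
  -- Step 1 : the Hausdorff d-measure of N vanishes
  have h1 : (μH[(d : ℝ)] : Measure (Euc d)) N = 0 := by
    have himg : N = ⇑T.symm '' (⇑T '' N) := by
      rw [Set.image_image]
      have : ∀ z : Euc d, T.symm (T z) = z := fun z => T.symm_apply_apply z
      simp [this]
    have hle := hTslip.hausdorffMeasure_image_le hdnn (⇑T '' N)
    rw [← himg] at hle
    have hpi0 : (μH[(d : ℝ)] : Measure (Fin d → ℝ)) (⇑T '' N) = 0 := by
      rw [hHpi, ← hvol_eq N]
      exact hN
    rw [hpi0, mul_zero] at hle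
    exact le_antisymm hle zero_le
  -- Step 2 : the Hausdorff d-measure of the image vanishes
  have h2 : (μH[(d : ℝ)] : Measure (Euc d)) (Ψ '' N) = 0 := by
    have := hlip.hausdorffMeasure_image_le hdnn
    rw [h1, mul_zero] at this
    exact le_antisymm this zero_le
  -- Step 3 : conclude for the volume
  rw [hvol_eq (Ψ '' N), ← hHpi]
  have := hTlip.hausdorffMeasure_image_le hdnn (Ψ '' N)
  rw [h2] at this
  simpa using le_antisymm (this.trans (by simp)) zero_le

end NullImage

section BadSet

open MeasureTheory
open scoped NNReal

variable {d : ℕ}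

set_option maxHeartbeats 1000000 in
/-- The set of points `m` of the ball such that the segment from `apex` to `m` meets the
"flat" set `S` has volume zero. -/
lemma volume_bad_eq_zero
    (S : Set (Euc d)) (hScl : IsClosed S)
    (ω apex : Euc d) (r₀ : ℝ) (hr₀ : 0 < r₀)
    (hSsub : S ⊆ closedBall ω r₀)
    (ebar fbar : Euc d) (heb : ‖ebar‖ = 1) (hfb : ‖fbar‖ = 1)
    (horth : (inner ℝ ebar fbar : ℝ) = 0)
    (κ : ℝ) (hκ : 0 < κ)
    (hexp : ∀ τ ∈ S, ∀ τ' ∈ S,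
      κ * ‖τ' - τ‖ ≤ ‖(τ' - τ) - (inner ℝ ebar (τ' - τ) : ℝ) • ebar
          - (inner ℝ fbar (τ' - τ) : ℝ) • fbar‖)
    (hapexmem : apex ∈ closedBall ω r₀) (hapex : apex ∉ S) :
    volume {m | m ∈ closedBall ω r₀ ∧ ∃ ζ ∈ S, ∃ t : ℝ, t ∈ Set.Ioc (0:ℝ) 1 ∧
      ζ = apex + t • (m - apex)} = 0 := by
  classical
  rcases S.eq_empty_or_nonempty with hSe | hSne
  · have : {m | m ∈ closedBall ω r₀ ∧ ∃ ζ ∈ S, ∃ t : ℝ, t ∈ Set.Ioc (0:ℝ) 1 ∧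
        ζ = apex + t • (m - apex)} = ∅ := by
      ext m; simp [hSe]
    rw [this]; exact measure_empty
  have hdpos0 : 0 < Metric.infDist apex S :=
    (hScl.notMem_iff_infDist_pos hSne).mp hapex
  set dpos : ℝ := Metric.infDist apex S with hdpos_def
  have hdpos : 0 < dpos := hdpos0
  set π : Euc d → Euc d := fun u =>
    u - (inner ℝ ebar u : ℝ) • ebar - (inner ℝ fbar u : ℝ) • fbar with hπ
  have hπsub : ∀ u u', π (u - u') = π u - π u' := by
    intro u u'
    simp only [hπ]
    rw [inner_sub_right, inner_sub_right, sub_smul, sub_smul]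
    abel
  have hπeb : ∀ u, (inner ℝ ebar (π u) : ℝ) = 0 := by
    intro u
    simp only [hπ]
    rw [inner_sub_right, inner_sub_right, real_inner_smul_right, real_inner_smul_right]
    rw [real_inner_self_eq_norm_sq, heb, horth]
    ring
  have hπfb : ∀ u, (inner ℝ fbar (π u) : ℝ) = 0 := by
    intro u
    simp only [hπ]
    rw [inner_sub_right, inner_sub_right, real_inner_smul_right, real_inner_smul_right]
    rw [real_inner_self_eq_norm_sq, hfb]
    have h0 : (inner ℝ fbar ebar : ℝ) = 0 := by rw [← horth]; exact real_inner_comm ebar fbar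
    rw [h0]
    ring
  set A : Set (Euc d) := π '' S with hA
  set G : Euc d → Euc d := fun p =>
    if h : ∃ τ, τ ∈ S ∧ π τ = p then h.choose else apex with hG
  have hGmem : ∀ p ∈ A, G p ∈ S ∧ π (G p) = p := by
    intro p hp
    obtain ⟨τ, hτ, hπτ⟩ := hp
    have hex : ∃ τ, τ ∈ S ∧ π τ = p := ⟨τ, hτ, hπτ⟩
    simp only [hG, dif_pos hex]
    exact ⟨hex.choose_spec.1, hex.choose_spec.2⟩
  have hGuniq : ∀ τ ∈ S, G (π τ) = τ := by
    intro τ hτ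
    have hmem : π τ ∈ A := ⟨τ, hτ, rfl⟩
    obtain ⟨hGS, hGπ⟩ := hGmem _ hmem
    have h0 := hexp τ hτ (G (π τ)) hGS
    have hz : π (G (π τ) - τ) = 0 := by rw [hπsub, hGπ, sub_self]
    have heq : ‖(G (π τ) - τ) - (inner ℝ ebar (G (π τ) - τ) : ℝ) • ebar
        - (inner ℝ fbar (G (π τ) - τ) : ℝ) • fbar‖ = 0 := by
      have h2 : π (G (π τ) - τ) = (G (π τ) - τ) - (inner ℝ ebar (G (π τ) - τ) : ℝ) • ebar
          - (inner ℝ fbar (G (π τ) - τ) : ℝ) • fbar := rfl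
      rw [← h2, hz, norm_zero]
    rw [heq] at h0
    have h1 : ‖G (π τ) - τ‖ ≤ 0 := by nlinarith [norm_nonneg (G (π τ) - τ)]
    have h2 := le_antisymm h1 (norm_nonneg _)
    rwa [norm_sub_eq_zero_iff] at h2
  have hGlip : ∀ p ∈ A, ∀ p' ∈ A, ‖G p - G p'‖ ≤ κ⁻¹ * ‖p - p'‖ := by
    intro p hp p' hp'
    obtain ⟨hGS, hGπ⟩ := hGmem p hp
    obtain ⟨hGS', hGπ'⟩ := hGmem p' hp'
    have h0 := hexp (G p') hGS' (G p) hGS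
    have h2 : π (G p - G p') = (G p - G p') - (inner ℝ ebar (G p - G p') : ℝ) • ebar
        - (inner ℝ fbar (G p - G p') : ℝ) • fbar := rfl
    rw [← h2, hπsub, hGπ, hGπ'] at h0
    calc ‖G p - G p'‖ = κ⁻¹ * (κ * ‖G p - G p'‖) := by
          field_simp
      _ ≤ κ⁻¹ * ‖p - p'‖ := by
          refine mul_le_mul_of_nonneg_left ?_ (by positivity)
          exact h0
  set smax : ℝ := 2 * r₀ / dpos with hsmax
  set N : Set (Euc d) := {u | ∃ w ∈ A, ∃ sc ∈ Set.Icc (1:ℝ) smax, u = w + sc • ebar} with hN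
  set Ψ : Euc d → Euc d := fun u =>
    apex + (inner ℝ ebar u : ℝ) • (G (u - (inner ℝ ebar u : ℝ) • ebar) - apex) with hΨ
  have hwperpA : ∀ w ∈ A, (inner ℝ ebar w : ℝ) = 0 ∧ (inner ℝ fbar w : ℝ) = 0 := by
    rintro w ⟨ζ, hζ, rfl⟩
    exact ⟨hπeb ζ, hπfb ζ⟩
  have hiu : ∀ w ∈ A, ∀ sc : ℝ, (inner ℝ ebar (w + sc • ebar) : ℝ) = sc := by
    intro w hw sc
    rw [inner_add_right, real_inner_smul_right, real_inner_self_eq_norm_sq, heb,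
      (hwperpA w hw).1]
    ring
  have hGball : ∀ p ∈ A, ‖G p - apex‖ ≤ 2 * r₀ := by
    intro p hp
    have h1 : G p ∈ S := (hGmem p hp).1
    calc ‖G p - apex‖ = dist (G p) apex := (dist_eq_norm _ _).symm
      _ ≤ dist (G p) ω + dist ω apex := dist_triangle _ _ _
      _ ≤ r₀ + r₀ := by
          refine add_le_add (Metric.mem_closedBall.mp (hSsub h1)) ?_
          rw [dist_comm]; exact Metric.mem_closedBall.mp hapexmem
      _ = 2 * r₀ := by ring
  -- covering of the bad set
  have hcover : {m | m ∈ closedBall ω r₀ ∧ ∃ ζ ∈ S, ∃ t : ℝ, t ∈ Set.Ioc (0:ℝ) 1 ∧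
      ζ = apex + t • (m - apex)} ⊆ Ψ '' N := by
    rintro m ⟨hm, ζ, hζS, t, ⟨ht0, ht1⟩, hζeq⟩
    have hζa : ζ - apex = t • (m - apex) := by rw [hζeq]; abel
    have hζd : dpos ≤ ‖ζ - apex‖ := by
      calc dpos ≤ dist apex ζ := Metric.infDist_le_dist_of_mem hζS
        _ = ‖ζ - apex‖ := by rw [dist_eq_norm, norm_sub_rev]
    have hma : ‖m - apex‖ ≤ 2 * r₀ := by
      calc ‖m - apex‖ = dist m apex := (dist_eq_norm m apex).symm
        _ ≤ dist m ω + dist ω apex := dist_triangle m ω apex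
        _ ≤ r₀ + r₀ := by
            refine add_le_add (Metric.mem_closedBall.mp hm) ?_
            rw [dist_comm]; exact Metric.mem_closedBall.mp hapexmem
        _ = 2 * r₀ := by ring
    set sc : ℝ := t⁻¹ with hsc
    have hsc1 : 1 ≤ sc := by
      rw [hsc]
      exact one_le_inv_iff₀.mpr ⟨ht0, ht1⟩
    have hζnorm : ‖ζ - apex‖ = t * ‖m - apex‖ := by
      rw [hζa, norm_smul, Real.norm_eq_abs, abs_of_pos ht0]
    have hscmax : sc ≤ smax := by
      have h1 : dpos ≤ 2 * r₀ * t := by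
        calc dpos ≤ ‖ζ - apex‖ := hζd
          _ = t * ‖m - apex‖ := hζnorm
          _ ≤ t * (2 * r₀) := mul_le_mul_of_nonneg_left hma ht0.le
          _ = 2 * r₀ * t := by ring
      have h2 : (1:ℝ) / t ≤ 2 * r₀ / dpos := by
        rw [div_le_div_iff₀ ht0 hdpos]
        nlinarith
      rw [hsc, hsmax, inv_eq_one_div]
      exact h2
    set w : Euc d := π ζ with hw
    have hwA : w ∈ A := ⟨ζ, hζS, rfl⟩
    have hGw : G w = ζ := hGuniq ζ hζS
    refine ⟨w + sc • ebar, ⟨w, hwA, sc, ⟨hsc1, hscmax⟩, rfl⟩, ?_⟩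
    simp only [hΨ]
    rw [hiu w hwA sc]
    have hwrec : w + sc • ebar - sc • ebar = w := by abel
    rw [hwrec, hGw, hζa, smul_smul]
    have hsct : sc * t = 1 := by rw [hsc]; field_simp
    rw [hsct, one_smul]
    abel
  -- N is null
  have hNnull : volume N = 0 := by
    have hsub : N ⊆ (((ℝ ∙ fbar)ᗮ : Submodule ℝ (Euc d)) : Set (Euc d)) := by
      rintro u ⟨w, hwA, sc, hsc, rfl⟩
      rw [SetLike.mem_coe, Submodule.mem_orthogonal_singleton_iff_inner_right]
      rw [inner_add_right, real_inner_smul_right, (hwperpA w hwA).2]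
      have h0 : (inner ℝ fbar ebar : ℝ) = 0 := by
        rw [← horth]; exact real_inner_comm ebar fbar
      rw [h0]
      ring
    have hW : volume (((ℝ ∙ fbar)ᗮ : Submodule ℝ (Euc d)) : Set (Euc d)) = 0 := by
      refine Measure.addHaar_submodule _ _ ?_
      intro htop
      have hmem : fbar ∈ ((ℝ ∙ fbar)ᗮ : Submodule ℝ (Euc d)) := by
        rw [htop]; exact Submodule.mem_top
      rw [Submodule.mem_orthogonal_singleton_iff_inner_right] at hmem
      rw [real_inner_self_eq_norm_sq, hfb] at hmem
      norm_num at hmem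
    exact measure_mono_null hsub hW
  -- Ψ is Lipschitz on N
  set Kr : ℝ := 2 * r₀ + 2 * (smax * κ⁻¹) with hKr
  have hsmaxpos : 0 < smax := by
    rw [hsmax]; positivity
  have hKrnn : 0 ≤ Kr := by
    rw [hKr]; positivity
  have hΨlip : LipschitzOnWith Kr.toNNReal Ψ N := by
    refine LipschitzOnWith.of_dist_le_mul ?_
    rintro u ⟨w, hwA, sc, hscI, rfl⟩ u' ⟨w', hw'A, sc', hsc'I, rfl⟩
    rw [dist_eq_norm, dist_eq_norm]
    simp only [hΨ]
    rw [hiu w hwA sc, hiu w' hw'A sc']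
    have hwrec : w + sc • ebar - sc • ebar = w := by abel
    have hwrec' : w' + sc' • ebar - sc' • ebar = w' := by abel
    rw [hwrec, hwrec']
    have hdiff : apex + sc • (G w - apex) - (apex + sc' • (G w' - apex))
        = (sc - sc') • (G w - apex) + sc' • (G w - G w') := by
      module
    rw [hdiff]
    have hdsc : |sc - sc'| ≤ ‖w + sc • ebar - (w' + sc' • ebar)‖ := by
      have h1 : sc - sc' = (inner ℝ ebar (w + sc • ebar - (w' + sc' • ebar)) : ℝ) := by
        rw [inner_sub_right, hiu w hwA sc, hiu w' hw'A sc']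
      rw [h1]
      calc |(inner ℝ ebar (w + sc • ebar - (w' + sc' • ebar)) : ℝ)|
          ≤ ‖ebar‖ * ‖w + sc • ebar - (w' + sc' • ebar)‖ := abs_real_inner_le_norm _ _
        _ = _ := by rw [heb, one_mul]
    have hdw : ‖w - w'‖ ≤ 2 * ‖w + sc • ebar - (w' + sc' • ebar)‖ := by
      have h1 : w - w' = (w + sc • ebar - (w' + sc' • ebar)) - (sc - sc') • ebar := by
        rw [sub_smul]; abel
      rw [h1]
      calc ‖(w + sc • ebar - (w' + sc' • ebar)) - (sc - sc') • ebar‖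
          ≤ ‖w + sc • ebar - (w' + sc' • ebar)‖ + ‖(sc - sc') • ebar‖ := norm_sub_le _ _
        _ = ‖w + sc • ebar - (w' + sc' • ebar)‖ + |sc - sc'| := by
            rw [norm_smul, heb, Real.norm_eq_abs, mul_one]
        _ ≤ _ := by linarith
    have hterm1 : ‖(sc - sc') • (G w - apex)‖ ≤ |sc - sc'| * (2 * r₀) := by
      rw [norm_smul, Real.norm_eq_abs]
      exact mul_le_mul_of_nonneg_left (hGball w hwA) (abs_nonneg _)
    have hterm2 : ‖sc' • (G w - G w')‖ ≤ smax * (κ⁻¹ * ‖w - w'‖) := by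
      rw [norm_smul, Real.norm_eq_abs]
      have h1 : |sc'| ≤ smax := by
        rw [abs_of_pos (by linarith [hsc'I.1] : (0:ℝ) < sc')]
        exact hsc'I.2
      have h2 : ‖G w - G w'‖ ≤ κ⁻¹ * ‖w - w'‖ := hGlip w hwA w' hw'A
      exact mul_le_mul h1 h2 (norm_nonneg _) (by positivity)
    have hKcoe : (Kr.toNNReal : ℝ) = Kr := Real.coe_toNNReal _ hKrnn
    rw [hKcoe]
    calc ‖(sc - sc') • (G w - apex) + sc' • (G w - G w')‖
        ≤ ‖(sc - sc') • (G w - apex)‖ + ‖sc' • (G w - G w')‖ := norm_add_le _ _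
      _ ≤ |sc - sc'| * (2 * r₀) + smax * (κ⁻¹ * ‖w - w'‖) := add_le_add hterm1 hterm2
      _ ≤ ‖w + sc • ebar - (w' + sc' • ebar)‖ * (2 * r₀)
          + smax * (κ⁻¹ * (2 * ‖w + sc • ebar - (w' + sc' • ebar)‖)) := by
          refine add_le_add ?_ ?_
          · exact mul_le_mul_of_nonneg_right hdsc (by positivity)
          · refine mul_le_mul_of_nonneg_left ?_ (by positivity)
            exact mul_le_mul_of_nonneg_left hdw (by positivity)
      _ = Kr * ‖w + sc • ebar - (w' + sc' • ebar)‖ := by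
          rw [hKr]; ring
  exact measure_mono_null hcover (volume_image_null hNnull hΨlip)

end BadSet

section Helpers

variable {d : ℕ}

lemma cos_lt_one_of_mem {ϑ : ℝ} (hϑ : ϑ ∈ Set.Ioc 0 (Real.pi / 2)) : Real.cos ϑ < 1 := by
  have hπ := Real.pi_pos
  have h1 : Real.cos ϑ < Real.cos 0 :=
    Real.strictAntiOn_cos ⟨le_rfl, hπ.le⟩ ⟨hϑ.1.le, by linarith [hϑ.2]⟩ hϑ.1
  simpa using h1

lemma cos_angle_le_of_bounded {Γ : Config d} {ϑ : ℝ} (hb : Γ.Bounded ϑ)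
    (hϑ : ϑ ∈ Set.Ioc 0 (Real.pi / 2)) (z : Euc d) :
    Real.cos (Γ.angle z) ≤ Real.cos ϑ := by
  have h1 := hb z; have h2 := (Γ.angle_mem z).2
  have hπ := Real.pi_pos
  refine Real.strictAntiOn_cos.le_iff_ge ?_ ?_ |>.mpr h1 <;> constructor <;> linarith [hϑ.1]

/-- A finite `ε`-net of unit vectors. -/
lemma exists_net (d : ℕ) {εN : ℝ} (hε : 0 < εN) :
    ∃ t : Finset (Euc d), (∀ c ∈ t, ‖c‖ = 1) ∧
      ∀ u : Euc d, ‖u‖ = 1 → ∃ c ∈ t, ‖u - c‖ ≤ εN := by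
  classical
  have hcomp : IsCompact (sphere (0:Euc d) 1) := isCompact_sphere 0 1
  have hcover : sphere (0:Euc d) 1 ⊆
      ⋃ c : sphere (0:Euc d) 1, ball (c : Euc d) εN := by
    intro u hu
    exact Set.mem_iUnion.mpr ⟨⟨u, hu⟩, by simpa using hε⟩
  obtain ⟨t, ht⟩ := hcomp.elim_finite_subcover
    (fun c : sphere (0:Euc d) 1 => ball (c : Euc d) εN) (fun _ => isOpen_ball) hcover
  refine ⟨t.image Subtype.val, ?_, ?_⟩
  · intro c hc
    obtain ⟨c', _, rfl⟩ := Finset.mem_image.mp hc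
    have h2 := c'.2
    rwa [mem_sphere_zero_iff_norm] at h2
  · intro u hu
    have humem : u ∈ sphere (0:Euc d) 1 := by rwa [mem_sphere_zero_iff_norm]
    obtain ⟨c', hc't, hc'⟩ := Set.mem_iUnion₂.mp (ht humem)
    refine ⟨(c' : Euc d), Finset.mem_image_of_mem Subtype.val hc't, ?_⟩
    rw [← dist_eq_norm]
    exact (mem_ball.mp hc').le

/-- The secant bound: approximate span-avoidance passes to closures with fixed net directions. -/
lemma secant_bound {Γ : Config d} {X' Y' : Set (Euc d)} {e f : Euc d} {Δ εN : ℝ}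
    (hεN : 0 ≤ εN)
    (haxX : ∀ z ∈ X', ‖Γ.axis z - e‖ ≤ εN) (haxY : ∀ z ∈ Y', ‖Γ.axis z - f‖ ≤ εN)
    (hcrit : ∀ x' ∈ X', ∀ y' ∈ Y', ∀ a b : ℝ,
      Δ * (|a| + |b|) ≤ ‖(y' - x') - a • Γ.axis x' - b • Γ.axis y'‖ * 8)
    {τ τ' : Euc d} (hτ : τ ∈ closure X') (hτ' : τ' ∈ closure Y') (a b : ℝ) :
    (Δ - 8 * εN) * (|a| + |b|) ≤ 8 * ‖(τ' - τ) - a • e - b • f‖ := by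
  refine le_of_forall_pos_le_add ?_
  intro ε hεpos
  set η : ℝ := ε / 16 with hη
  have hηpos : 0 < η := by positivity
  obtain ⟨x', hx'X, hx'd⟩ := Metric.mem_closure_iff.mp hτ η hηpos
  obtain ⟨y', hy'Y, hy'd⟩ := Metric.mem_closure_iff.mp hτ' η hηpos
  have h0 := hcrit x' hx'X y' hy'Y a b
  have hdecomp : (y' - x') - a • Γ.axis x' - b • Γ.axis y'
      = ((τ' - τ) - a • e - b • f) + ((y' - x') - (τ' - τ))
        + a • (e - Γ.axis x') + b • (f - Γ.axis y') := by
    rw [smul_sub, smul_sub]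
    abel
  have hnorm1 : ‖(y' - x') - (τ' - τ)‖ ≤ 2 * η := by
    have hrw : (y' - x') - (τ' - τ) = (y' - τ') - (x' - τ) := by abel
    rw [hrw]
    have h1 : ‖y' - τ'‖ ≤ η := by
      rw [← dist_eq_norm, dist_comm]
      exact hy'd.le
    have h2 : ‖x' - τ‖ ≤ η := by
      rw [← dist_eq_norm, dist_comm]
      exact hx'd.le
    calc ‖(y' - τ') - (x' - τ)‖ ≤ ‖y' - τ'‖ + ‖x' - τ‖ := norm_sub_le _ _
      _ ≤ 2 * η := by linarith
  have hnorm : ‖(y' - x') - a • Γ.axis x' - b • Γ.axis y'‖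
      ≤ ‖(τ' - τ) - a • e - b • f‖ + 2 * η + εN * (|a| + |b|) := by
    have t1a := norm_add_le (((τ' - τ) - a • e - b • f) + ((y' - x') - (τ' - τ))
        + a • (e - Γ.axis x')) (b • (f - Γ.axis y'))
    have t1b := norm_add_le (((τ' - τ) - a • e - b • f) + ((y' - x') - (τ' - τ)))
        (a • (e - Γ.axis x'))
    have t1c := norm_add_le ((τ' - τ) - a • e - b • f) ((y' - x') - (τ' - τ))
    have t2 : ‖a • (e - Γ.axis x')‖ ≤ |a| * εN := by
      rw [norm_smul, Real.norm_eq_abs]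
      refine mul_le_mul_of_nonneg_left ?_ (abs_nonneg a)
      rw [norm_sub_rev]
      exact haxX x' hx'X
    have t3 : ‖b • (f - Γ.axis y')‖ ≤ |b| * εN := by
      rw [norm_smul, Real.norm_eq_abs]
      refine mul_le_mul_of_nonneg_left ?_ (abs_nonneg b)
      rw [norm_sub_rev]
      exact haxY y' hy'Y
    rw [hdecomp]
    nlinarith [hnorm1, t1a, t1b, t1c, t2, t3]
  have habs : 0 ≤ |a| + |b| := by positivity
  have hmul := mul_le_mul_of_nonneg_left hnorm (by norm_num : (0:ℝ) ≤ 8)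
  nlinarith [h0, hmul]

end Helpers


set_option maxHeartbeats 2000000 in
/-- Theorem 4.1: for a `ϑ`-bounded configuration and a connected open set
`U`, any two points of `U` are connected by an undirected edge path in `G_U(Γ)`. -/
theorem stmt11 (d : ℕ) (hd : 1 ≤ d) (ϑ : ℝ) (hϑ : ϑ ∈ Set.Ioc 0 (Real.pi / 2))
    (Γ : Config d) (hΓ : Γ.Bounded ϑ) (U : Set (Euc d)) (hU : IsOpen U)
    (hUconn : IsConnected U) (x y : Euc d) (hx : x ∈ U) (hy : y ∈ U) :
    ∃ (N : ℕ) (p : ℕ → Euc d), p 0 = x ∧ p N = y ∧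
      ∀ i < N, adjIn d Γ U (p i) (p (i + 1)) := by
  classical
  by_contra hcon
  set X : Set (Euc d) := {z | z ∈ U ∧ reach Γ U x z} with hXdef
  set Y : Set (Euc d) := {z | z ∈ U ∧ ¬ reach Γ U x z} with hYdef
  have hXU : ∀ z ∈ X, z ∈ U := fun z hz => hz.1
  have hYU : ∀ z ∈ Y, z ∈ U := fun z hz => hz.1
  have hxX : x ∈ X := ⟨hx, reach_refl Γ U x⟩
  have hyY : y ∈ Y := ⟨hy, fun hr => hcon hr⟩
  have hXY : ∀ z, z ∈ U → z ∈ X ∨ z ∈ Y := by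
    intro z hz
    by_cases h : reach Γ U x z
    · exact Or.inl ⟨hz, h⟩
    · exact Or.inr ⟨hz, h⟩
  have hdisj : ∀ z ∈ X, z ∉ Y := fun z hz hz' => hz'.2 hz.2
  have hNoAdj : ∀ x' ∈ X, ∀ y' ∈ Y, ¬ adjIn d Γ U x' y' :=
    fun x' hx' y' hy' hadj => hy'.2 (reach_step Γ U hx'.2 hadj)
  have hNoLink : ∀ x' ∈ X, ∀ y' ∈ Y, ∀ m, ¬ (adjIn d Γ U x' m ∧ adjIn d Γ U m y') :=
    fun x' hx' y' hy' m h => hy'.2 (reach_step Γ U (reach_step Γ U hx'.2 h.1) h.2)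
  set Δ : ℝ := 1 - Real.cos ϑ with hΔdef
  have hΔpos : 0 < Δ := by
    simp only [hΔdef]; linarith [cos_lt_one_of_mem hϑ]
  have hcrit8 : ∀ x' ∈ X, ∀ y' ∈ Y, ∀ a b : ℝ,
      Δ * (|a| + |b|) ≤ ‖(y' - x') - a • Γ.axis x' - b • Γ.axis y'‖ * 8 := by
    intro x' hx' y' hy' a b
    by_contra hlt
    push_neg at hlt
    have hne : x' ≠ y' := by
      intro he
      exact hdisj x' hx' (by rw [he]; exact hy')
    have hlt' : ‖(y' - x') - a • Γ.axis x' - b • Γ.axis y'‖ * 8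
        < (1 - Real.cos ϑ) * (|a| + |b|) := by
      simpa [hΔdef] using hlt
    rcases link_of_near_span (Γ := Γ) (U := U) hΓ hϑ (hXU x' hx') (hYU y' hy') hne hlt' with
      h | ⟨m, h1, h2⟩
    · exact hNoAdj x' hx' y' hy' h
    · exact hNoLink x' hx' y' hy' m ⟨h1, h2⟩
  have hcritI : ∀ x' ∈ X, ∀ y' ∈ Y, |(inner ℝ (Γ.axis x') (Γ.axis y') : ℝ)| ≤ Real.cos ϑ := by
    intro x' hx' y' hy'
    by_contra hlt
    push_neg at hlt
    have hcc : Real.cos (Γ.angle y') < |(inner ℝ (Γ.axis x') (Γ.axis y') : ℝ)| :=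
      lt_of_le_of_lt (cos_angle_le_of_bounded hΓ hϑ y') hlt
    obtain ⟨m, h1, h2⟩ := link_of_axes_aligned (hXU x' hx') (hYU y' hy') hcc
    exact hNoLink x' hx' y' hy' m ⟨h1, h2⟩
  have hInvX : ∀ p ∈ X, ∀ z, z ∈ U → z - p ∈ Γ.cone p → z ∈ X := by
    intro p hp z hzU hzc
    exact ⟨hzU, reach_step Γ U hp.2 (Or.inl ⟨hp.1, hzc⟩)⟩
  have hInvY : ∀ p ∈ Y, ∀ z, z ∈ U → z - p ∈ Γ.cone p → z ∈ Y := by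
    intro p hp z hzU hzc
    refine ⟨hzU, fun hr => hp.2 ?_⟩
    exact reach_step Γ U hr (adjIn_symm Γ U (Or.inl ⟨hp.1, hzc⟩))
  have hApprox : ∀ (P Q : Set (Euc d)), (∀ a' ∈ P, a' ∈ U) →
      (∀ p ∈ P, ∀ z, z ∈ U → z - p ∈ Γ.cone p → z ∈ P) → (∀ a' ∈ P, a' ∉ Q) →
      ∀ p ∈ P, ∀ ρ : ℝ, 0 < ρ → ∃ z', z' ∈ P ∧ z' ∉ closure Q ∧ dist z' p ≤ ρ := by
    intro P Q hPU hPinv hPQ p hp ρ hρ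
    obtain ⟨ε, hε, hball⟩ := Metric.isOpen_iff.mp hU p (hPU p hp)
    set t : ℝ := min ρ (ε / 2) with ht
    have htpos : 0 < t := lt_min hρ (by linarith)
    set z' : Euc d := p + t • Γ.axis p with hz'
    have hz'p : dist z' p = t := by
      rw [hz', dist_eq_norm]
      have h1 : p + t • Γ.axis p - p = t • Γ.axis p := by abel
      rw [h1, norm_smul, Γ.axis_norm p, Real.norm_eq_abs, abs_of_pos htpos, mul_one]
    have hz'U : z' ∈ U := by
      refine hball ?_
      rw [mem_ball, hz'p]
      exact lt_of_le_of_lt (min_le_right _ _) (by linarith)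
    set O : Set (Euc d) := U ∩ {w | w - p ∈ Γ.cone p} with hO
    have hOopen : IsOpen O :=
      hU.inter ((isOpen_doubleCone _ _).preimage (continuous_id.sub continuous_const))
    have hOP : O ⊆ P := fun w hw => hPinv p hp w hw.1 hw.2
    have hz'O : z' ∈ O := by
      refine ⟨hz'U, ?_⟩
      show z' - p ∈ Γ.cone p
      have h1 : z' - p = t • Γ.axis p := by rw [hz']; abel
      rw [h1]
      exact smul_axis_mem_cone Γ p (ne_of_gt htpos)
    refine ⟨z', hOP hz'O, ?_, by rw [hz'p]; exact min_le_left _ _⟩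
    intro hcl
    obtain ⟨ε', hε', hball'⟩ := Metric.isOpen_iff.mp hOopen z' hz'O
    obtain ⟨q, hqQ, hqd⟩ := Metric.mem_closure_iff.mp hcl ε' hε'
    exact hPQ q (hOP (hball' (by rwa [mem_ball, dist_comm]))) hqQ
  have hXdisjY : ∀ a' ∈ X, a' ∉ Y := hdisj
  have hYdisjX : ∀ a' ∈ Y, a' ∉ X := fun a' ha' hX' => hdisj a' hX' ha'
  obtain ⟨a₁, ha₁X, ha₁cl, _⟩ := hApprox X Y hXU hInvX hXdisjY x hxX 1 one_pos
  obtain ⟨b₁, hb₁Y, hb₁cl, _⟩ := hApprox Y X hYU hInvY hYdisjX y hyY 1 one_pos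
  have hω : ∃ ω, ω ∈ U ∧ ω ∈ closure X ∧ ω ∈ closure Y := by
    by_contra hno
    push_neg at hno
    have hpre := hUconn.isPreconnected
    have hres := hpre (closure Y)ᶜ (closure X)ᶜ isClosed_closure.isOpen_compl
      isClosed_closure.isOpen_compl ?_ ⟨a₁, hXU a₁ ha₁X, ha₁cl⟩ ⟨b₁, hYU b₁ hb₁Y, hb₁cl⟩
    · obtain ⟨z, hzU, hz1, hz2⟩ := hres
      rcases hXY z hzU with h | h
      · exact hz2 (subset_closure h)
      · exact hz1 (subset_closure h)
    · intro z hzU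
      by_cases hzX : z ∈ closure X
      · exact Or.inl (hno z hzU hzX)
      · exact Or.inr hzX
  obtain ⟨ω, hωU, hωX, hωY⟩ := hω
  obtain ⟨r₁, hr₁, hr₁ball⟩ := Metric.isOpen_iff.mp hU ω hωU
  set r₀ : ℝ := r₁ / 2 with hr₀def
  have hr₀ : 0 < r₀ := by rw [hr₀def]; positivity
  have hBU : closedBall ω r₀ ⊆ U := by
    intro z hz
    refine hr₁ball ?_
    rw [mem_ball]
    calc dist z ω ≤ r₀ := Metric.mem_closedBall.mp hz
      _ < r₁ := by rw [hr₀def]; linarith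
  obtain ⟨x₀, hx₀X, hx₀d⟩ := Metric.mem_closure_iff.mp hωX (r₀ / 4) (by positivity)
  obtain ⟨y₀, hy₀Y, hy₀d⟩ := Metric.mem_closure_iff.mp hωY (r₀ / 4) (by positivity)
  obtain ⟨apexa, hapexaX, hapexaCl, hapexad⟩ :=
    hApprox X Y hXU hInvX hXdisjY x₀ hx₀X (r₀ / 4) (by positivity)
  obtain ⟨apexb, hapexbY, hapexbCl, hapexbd⟩ :=
    hApprox Y X hYU hInvY hYdisjX y₀ hy₀Y (r₀ / 4) (by positivity)
  have hapexaB : apexa ∈ ball ω r₀ := by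
    rw [mem_ball]
    calc dist apexa ω ≤ dist apexa x₀ + dist x₀ ω := dist_triangle _ _ _
      _ ≤ r₀ / 4 + r₀ / 4 := by
          refine add_le_add hapexad ?_
          rw [dist_comm]
          exact hx₀d.le
      _ < r₀ := by linarith
  have hapexbB : apexb ∈ ball ω r₀ := by
    rw [mem_ball]
    calc dist apexb ω ≤ dist apexb y₀ + dist y₀ ω := dist_triangle _ _ _
      _ ≤ r₀ / 4 + r₀ / 4 := by
          refine add_le_add hapexbd ?_
          rw [dist_comm]
          exact hy₀d.le
      _ < r₀ := by linarith
  set εN : ℝ := Δ / 100 with hεNdef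
  have hεNpos : 0 < εN := by rw [hεNdef]; positivity
  obtain ⟨net, hnetU, hnet⟩ := exists_net d hεNpos
  have hcolex : ∀ z : Euc d, ∃ c, c ∈ net ∧ ‖Γ.axis z - c‖ ≤ εN := by
    intro z
    obtain ⟨c, hc, h⟩ := hnet (Γ.axis z) (Γ.axis_norm z)
    exact ⟨c, hc, h⟩
  choose col hcolmem hcoldist using hcolex
  set Xc : Euc d → Set (Euc d) := fun e => {z | z ∈ X ∧ col z = e} with hXc
  set Yc : Euc d → Set (Euc d) := fun f => {z | z ∈ Y ∧ col z = f} with hYc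
  set Zef : Euc d → Euc d → Set (Euc d) := fun e f =>
    closure (Xc e) ∩ closure (Yc f) ∩ closedBall ω r₀ with hZefdef
  set BadS : Euc d → Euc d → Euc d → Set (Euc d) := fun e f apex =>
    {m | m ∈ closedBall ω r₀ ∧ ∃ ζ ∈ Zef e f, ∃ t : ℝ, t ∈ Set.Ioc (0:ℝ) 1 ∧
      ζ = apex + t • (m - apex)} with hBadSdef
  have hbadnull : ∀ e ∈ net, ∀ f ∈ net, ∀ apex, apex ∈ closedBall ω r₀ →
      (apex ∉ closure (Xc e) ∨ apex ∉ closure (Yc f)) → volume (BadS e f apex) = 0 := by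
    intro e he f hf apex hapexmem hapexoff
    have hScl : IsClosed (Zef e f) :=
      (isClosed_closure.inter isClosed_closure).inter Metric.isClosed_closedBall
    have hSsub : Zef e f ⊆ closedBall ω r₀ := fun z hz => hz.2
    have hapexS : apex ∉ Zef e f := by
      rcases hapexoff with h | h
      · exact fun hzz => h hzz.1.1
      · exact fun hzz => h hzz.1.2
    rcases (Zef e f).eq_empty_or_nonempty with hne | hne
    · have hempty : BadS e f apex = ∅ := by
        ext m'
        simp only [hBadSdef, Set.mem_setOf_eq, Set.mem_empty_iff_false, iff_false, not_and]
        intro _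
        rw [hne]
        rintro ⟨ζ, hζ, _⟩
        exact absurd hζ (Set.notMem_empty ζ)
      rw [hempty]
      exact measure_empty
    · obtain ⟨τ₀, hτ₀⟩ := hne
      have hXcne : (Xc e).Nonempty := closure_nonempty_iff.mp ⟨τ₀, hτ₀.1.1⟩
      have hYcne : (Yc f).Nonempty := closure_nonempty_iff.mp ⟨τ₀, hτ₀.1.2⟩
      obtain ⟨x₁, hx₁⟩ := hXcne
      obtain ⟨y₁, hy₁⟩ := hYcne
      have haxX : ∀ z ∈ Xc e, ‖Γ.axis z - e‖ ≤ εN := by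
        intro z hz
        have h1 := hcoldist z
        rwa [hz.2] at h1
      have haxY : ∀ z ∈ Yc f, ‖Γ.axis z - f‖ ≤ εN := by
        intro z hz
        have h1 := hcoldist z
        rwa [hz.2] at h1
      have hune : ‖e‖ = 1 := hnetU e he
      have hunf : ‖f‖ = 1 := hnetU f hf
      have hgbound : |(inner ℝ e f : ℝ)| ≤ Real.cos ϑ + 2 * εN := by
        have hvw := hcritI x₁ hx₁.1 y₁ hy₁.1
        have hx₁e : ‖Γ.axis x₁ - e‖ ≤ εN := haxX x₁ hx₁
        have hy₁f : ‖Γ.axis y₁ - f‖ ≤ εN := haxY y₁ hy₁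
        have hdec : (inner ℝ e f : ℝ) = (inner ℝ (Γ.axis x₁) (Γ.axis y₁) : ℝ)
            + (inner ℝ (e - Γ.axis x₁) f : ℝ) + (inner ℝ (Γ.axis x₁) (f - Γ.axis y₁) : ℝ) := by
          rw [inner_sub_left, inner_sub_right]
          ring
        have h1 : |(inner ℝ (e - Γ.axis x₁) f : ℝ)| ≤ εN := by
          calc |(inner ℝ (e - Γ.axis x₁) f : ℝ)| ≤ ‖e - Γ.axis x₁‖ * ‖f‖ :=
                abs_real_inner_le_norm _ _
            _ ≤ εN := by
                rw [hunf, mul_one, norm_sub_rev]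
                exact hx₁e
        have h2 : |(inner ℝ (Γ.axis x₁) (f - Γ.axis y₁) : ℝ)| ≤ εN := by
          calc |(inner ℝ (Γ.axis x₁) (f - Γ.axis y₁) : ℝ)| ≤ ‖Γ.axis x₁‖ * ‖f - Γ.axis y₁‖ :=
                abs_real_inner_le_norm _ _
            _ ≤ εN := by
                rw [Γ.axis_norm x₁, one_mul, norm_sub_rev]
                exact hy₁f
        calc |(inner ℝ e f : ℝ)| ≤ |(inner ℝ (Γ.axis x₁) (Γ.axis y₁) : ℝ)|
              + |(inner ℝ (e - Γ.axis x₁) f : ℝ)| + |(inner ℝ (Γ.axis x₁) (f - Γ.axis y₁) : ℝ)| := by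
                rw [hdec]
                calc |_ + _ + _| ≤ |_ + _| + |(inner ℝ (Γ.axis x₁) (f - Γ.axis y₁) : ℝ)| :=
                      abs_add_le _ _
                  _ ≤ _ := by
                      have := abs_add_le ((inner ℝ (Γ.axis x₁) (Γ.axis y₁) : ℝ))
                        ((inner ℝ (e - Γ.axis x₁) f : ℝ))
                      linarith
          _ ≤ Real.cos ϑ + 2 * εN := by linarith
      have hglt1 : |(inner ℝ e f : ℝ)| < 1 := by
        refine lt_of_le_of_lt hgbound ?_
        have hcos : Real.cos ϑ = 1 - Δ := by rw [hΔdef]; ring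
        rw [hcos, hεNdef]
        linarith
      set δ₁ : ℝ := Δ / 10 with hδ₁def
      have hδ₁pos : 0 < δ₁ := by rw [hδ₁def]; positivity
      have hsec : ∀ τ ∈ Zef e f, ∀ τ' ∈ Zef e f, ∀ a b : ℝ,
          δ₁ * (|a| + |b|) ≤ ‖(τ' - τ) - a • e - b • f‖ := by
        intro τ hτ τ' hτ' a b
        have h := secant_bound (Γ := Γ) hεNpos.le haxX haxY
          (fun x' hx' y' hy' => hcrit8 x' hx'.1 y' hy'.1) hτ.1.1 hτ'.1.2 a b
        have habs : 0 ≤ |a| + |b| := by positivity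
        have hεval : Δ - 8 * εN = Δ * (92 / 100) := by rw [hεNdef]; ring
        rw [hεval] at h
        have hδval : δ₁ = Δ / 10 := hδ₁def
        nlinarith [mul_nonneg hΔpos.le habs]
      set κ : ℝ := δ₁ / (δ₁ + 2) with hκdef
      have hκ : 0 < κ := by rw [hκdef]; positivity
      have hexp : ∀ τ ∈ Zef e f, ∀ τ' ∈ Zef e f,
          κ * ‖τ' - τ‖ ≤ ‖(τ' - τ) - (inner ℝ e (τ' - τ) : ℝ) • e
            - (inner ℝ (gsOrth e f) (τ' - τ) : ℝ) • gsOrth e f‖ := by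
        intro τ hτ τ' hτ'
        have h := projPerp_large hune hunf hglt1 hδ₁pos (fun a b => hsec τ hτ τ' hτ' a b)
        exact h
      obtain ⟨hfb1, hefb⟩ := gsOrth_facts hune hunf hglt1
      exact volume_bad_eq_zero (Zef e f) hScl ω apex r₀ hr₀ hSsub
        e (gsOrth e f) hune hfb1 hefb κ hκ hexp hapexmem hapexS
  set BadAll : Set (Euc d) :=
    ⋃ e ∈ net, ⋃ f ∈ net, (BadS e f apexa ∪ BadS e f apexb) with hBadAlldef
  have hBadAllNull : volume BadAll = 0 := by
    rw [hBadAlldef]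
    refine (measure_biUnion_null_iff net.countable_toSet).mpr ?_
    intro e he
    refine (measure_biUnion_null_iff net.countable_toSet).mpr ?_
    intro f hf
    refine measure_union_null ?_ ?_
    · exact hbadnull e he f hf apexa (ball_subset_closedBall hapexaB)
        (Or.inr (fun hcl => hapexaCl (closure_mono (fun z hz => hz.1) hcl)))
    · exact hbadnull e he f hf apexb (ball_subset_closedBall hapexbB)
        (Or.inl (fun hcl => hapexbCl (closure_mono (fun z hz => hz.1) hcl)))
  have hballpos : 0 < volume (ball ω r₀) := measure_ball_pos volume ω hr₀
  have hmex : ∃ m, m ∈ ball ω r₀ ∧ m ∉ BadAll := by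
    by_contra hno
    push_neg at hno
    have hsub : ball ω r₀ ⊆ BadAll := fun m hm => hno m hm
    have h2 : volume (ball ω r₀) ≤ volume BadAll := measure_mono hsub
    rw [hBadAllNull] at h2
    exact absurd (le_antisymm h2 zero_le) (ne_of_gt hballpos)
  obtain ⟨m, hmB, hmBad⟩ := hmex
  have hXcover : closure X ⊆ ⋃ e ∈ net, closure (Xc e) := by
    have hXeq : X ⊆ ⋃ e ∈ net, Xc e := by
      intro z hz
      exact Set.mem_biUnion (hcolmem z) ⟨hz, rfl⟩
    calc closure X ⊆ closure (⋃ e ∈ net, Xc e) := closure_mono hXeq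
      _ = ⋃ e ∈ net, closure (Xc e) := net.finite_toSet.closure_biUnion _
  have hYcover : closure Y ⊆ ⋃ f ∈ net, closure (Yc f) := by
    have hYeq : Y ⊆ ⋃ f ∈ net, Yc f := by
      intro z hz
      exact Set.mem_biUnion (hcolmem z) ⟨hz, rfl⟩
    calc closure Y ⊆ closure (⋃ f ∈ net, Yc f) := closure_mono hYeq
      _ = ⋃ f ∈ net, closure (Yc f) := net.finite_toSet.closure_biUnion _
  have hseg : ∀ apex, apex ∈ ball ω r₀ →
      (∀ e ∈ net, ∀ f ∈ net, m ∉ BadS e f apex) → (apex ∉ closure X ∨ apex ∉ closure Y) →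
      ∀ z ∈ segment ℝ apex m, ¬ (z ∈ closure X ∧ z ∈ closure Y) := by
    intro apex hapexB hmgood hapexoff z hz hzZ
    rw [segment_eq_image'] at hz
    obtain ⟨t, ⟨ht0, ht1⟩, rfl⟩ := hz
    rcases eq_or_lt_of_le ht0 with h0 | h0
    · have h0' : t = 0 := h0.symm
      subst h0'
      simp only [zero_smul, add_zero] at hzZ
      rcases hapexoff with h | h
      · exact h hzZ.1
      · exact h hzZ.2
    · have hzB : apex + t • (m - apex) ∈ closedBall ω r₀ := by
        have hsegsub := (convex_closedBall ω r₀).segment_subset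
          (ball_subset_closedBall hapexB) (ball_subset_closedBall hmB)
        refine hsegsub ?_
        rw [segment_eq_image']
        exact ⟨t, ⟨ht0, ht1⟩, rfl⟩
      obtain ⟨e, he, hzXe⟩ := Set.mem_iUnion₂.mp (hXcover hzZ.1)
      obtain ⟨f, hf, hzYf⟩ := Set.mem_iUnion₂.mp (hYcover hzZ.2)
      refine hmgood e he f hf ?_
      refine ⟨ball_subset_closedBall hmB, apex + t • (m - apex), ⟨⟨hzXe, hzYf⟩, hzB⟩,
        t, ⟨h0, ht1⟩, rfl⟩
  have hmgooda : ∀ e ∈ net, ∀ f ∈ net, m ∉ BadS e f apexa := by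
    intro e he f hf hmem
    exact hmBad (Set.mem_biUnion he (Set.mem_biUnion hf (Or.inl hmem)))
  have hmgoodb : ∀ e ∈ net, ∀ f ∈ net, m ∉ BadS e f apexb := by
    intro e he f hf hmem
    exact hmBad (Set.mem_biUnion he (Set.mem_biUnion hf (Or.inr hmem)))
  set Seg : Set (Euc d) := segment ℝ apexa m ∪ segment ℝ m apexb with hSegdef
  have hSegpre : IsPreconnected Seg := by
    refine IsPreconnected.union m (right_mem_segment ℝ apexa m) (left_mem_segment ℝ m apexb)
      (convex_segment apexa m).isPreconnected (convex_segment m apexb).isPreconnected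
  have hSegball : Seg ⊆ ball ω r₀ := by
    refine Set.union_subset ?_ ?_
    · exact (convex_ball ω r₀).segment_subset hapexaB hmB
    · exact (convex_ball ω r₀).segment_subset hmB hapexbB
  have hSegnotZ : ∀ z ∈ Seg, ¬ (z ∈ closure X ∧ z ∈ closure Y) := by
    intro z hz
    rcases hz with hz | hz
    · exact hseg apexa hapexaB hmgooda (Or.inr hapexaCl) z hz
    · rw [segment_symm] at hz
      exact hseg apexb hapexbB hmgoodb (Or.inl hapexbCl) z hz
  have hres := hSegpre (closure Y)ᶜ (closure X)ᶜ isClosed_closure.isOpen_compl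
    isClosed_closure.isOpen_compl ?_ ?_ ?_
  · obtain ⟨z, hzSeg, hz1, hz2⟩ := hres
    have hzU : z ∈ U := hBU (ball_subset_closedBall (hSegball hzSeg))
    rcases hXY z hzU with h | h
    · exact hz2 (subset_closure h)
    · exact hz1 (subset_closure h)
  · intro z hz
    rcases (Classical.em (z ∈ closure X)) with hzX | hzX
    · exact Or.inl (fun hzY => hSegnotZ z hz ⟨hzX, hzY⟩)
    · exact Or.inr hzX
  · exact ⟨apexa, Or.inl (left_mem_segment ℝ apexa m), hapexaCl⟩
  · exact ⟨apexb, Or.inr (right_mem_segment ℝ m apexb), hapexbCl⟩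
end
end

section
/- Let d ≥ 1, ϑ ∈ (0, π/2], and let C̃ = Ṽ(v,θ) be a cone with apex angle θ ≥ ϑ. Fix r > 0 and assume R > (r + √d)/sin(ϑ). Then for every x ∈ ℝ^d the set B_R(x) ∩ (x + C̃) contains a lattice point y ∈ ℤ^d such that the closed ball of radius r around y is contained in x + C̃. -/
open MeasureTheory Metric
open scoped ENNReal

noncomputable section

lemma mem_coneSet_of_close (d : ℕ) (v : Euc d) (hv : ‖v‖ = 1) (θ : ℝ)
    (hθ0 : 0 < θ) (hθ2 : θ ≤ Real.pi / 2) (t ρ : ℝ) (hρ0 : 0 ≤ ρ)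
    (hρ : ρ < t * Real.sin θ) (h : Euc d) (hh : ‖h - t • v‖ ≤ ρ) :
    h ∈ coneSet d v θ := by
  have hsin : 0 < Real.sin θ :=
    Real.sin_pos_of_pos_of_lt_pi hθ0 (lt_of_le_of_lt hθ2 (by linarith [Real.pi_pos]))
  have hcos : 0 ≤ Real.cos θ := Real.cos_nonneg_of_mem_Icc ⟨by linarith [Real.pi_pos], hθ2⟩
  set a : ℝ := (inner ℝ v h : ℝ) with ha
  set e : Euc d := h - a • v with he
  have hvv : (inner ℝ v v : ℝ) = 1 := by
    rw [real_inner_self_eq_norm_sq, hv]; norm_num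
  have hve : (inner ℝ v e : ℝ) = 0 := by
    rw [he, inner_sub_right, real_inner_smul_right, hvv, mul_one, ha, sub_self]
  set b : ℝ := ‖e‖ with hb
  have hb0 : 0 ≤ b := norm_nonneg _
  have hpyth : ∀ c : ℝ, ‖c • v + e‖ ^ 2 = c ^ 2 + b ^ 2 := by
    intro c
    have h1 : (inner ℝ (c • v) e : ℝ) = 0 := by rw [real_inner_smul_left, hve, mul_zero]
    rw [norm_add_sq_real, h1, norm_smul]
    simp only [Real.norm_eq_abs, hv, mul_one, mul_zero, add_zero, sq_abs, hb]
  have h0 : h = a • v + e := by rw [he]; module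
  have hnormh : ‖h‖ ^ 2 = a ^ 2 + b ^ 2 := by
    conv_lhs => rw [h0]
    exact hpyth a
  have hdist : (a - t) ^ 2 + b ^ 2 ≤ ρ ^ 2 := by
    have h1 : h - t • v = (a - t) • v + e := by rw [h0]; module
    have := hpyth (a - t)
    rw [← h1] at this
    nlinarith [norm_nonneg (h - t • v)]
  -- Cauchy-Schwarz in the plane
  have hkey : t * Real.sin θ - ρ ≤ a * Real.sin θ - b * Real.cos θ := by
    have hsc : Real.sin θ ^ 2 + Real.cos θ ^ 2 = 1 := Real.sin_sq_add_cos_sq θ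
    nlinarith [sq_nonneg ((a - t) * Real.cos θ + b * Real.sin θ),
      sq_nonneg ((a - t) * Real.sin θ - b * Real.cos θ + ρ), sq_nonneg ρ]
  have hab : b * Real.cos θ < a * Real.sin θ := by linarith
  have ha0 : 0 < a := by nlinarith
  have hne : h ≠ 0 := by
    intro h0'
    rw [h0', inner_zero_right] at ha
    simp [ha] at ha0
  have hnh : 0 < ‖h‖ := norm_pos_iff.mpr hne
  refine ⟨hne, ?_⟩
  rw [lt_div_iff₀ hnh]
  have hsq : (Real.cos θ * ‖h‖) ^ 2 < a ^ 2 := by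
    have : Real.cos θ ^ 2 * (a ^ 2 + b ^ 2) < a ^ 2 := by
      nlinarith [Real.sin_sq_add_cos_sq θ, mul_nonneg hb0 hcos]
    calc (Real.cos θ * ‖h‖) ^ 2 = Real.cos θ ^ 2 * ‖h‖ ^ 2 := by ring
    _ = Real.cos θ ^ 2 * (a ^ 2 + b ^ 2) := by rw [hnormh]
    _ < a ^ 2 := this
  exact lt_of_pow_lt_pow_left₀ 2 ha0.le hsq

lemma norm_latt_round_sub_le (d : ℕ) (c : Euc d) :
    ‖latt d (fun i => round (c i)) - c‖ ≤ Real.sqrt d / 2 := by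
  rw [EuclideanSpace.norm_eq]
  have hsum : (∑ i, ‖(latt d (fun i => round (c i)) - c) i‖ ^ 2) ≤ (d : ℝ) / 4 := by
    have h1 : ∀ i, ‖(latt d (fun i => round (c i)) - c) i‖ ^ 2 ≤ (1 / 4 : ℝ) := by
      intro i
      have h2 : (latt d (fun i => round (c i)) - c) i = (round (c i) : ℝ) - c i := rfl
      rw [h2, Real.norm_eq_abs, sq_abs]
      have h3 := abs_sub_round (c i)
      rw [abs_sub_comm] at h3
      nlinarith [abs_nonneg ((round (c i) : ℝ) - c i), sq_abs ((round (c i) : ℝ) - c i)]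
    calc (∑ i, ‖(latt d (fun i => round (c i)) - c) i‖ ^ 2)
        ≤ ∑ _i : Fin d, (1 / 4 : ℝ) := Finset.sum_le_sum fun i _ => h1 i
      _ = (d : ℝ) / 4 := by simp; ring
  calc Real.sqrt (∑ i, ‖(latt d (fun i => round (c i)) - c) i‖ ^ 2)
      ≤ Real.sqrt ((d : ℝ) / 4) := Real.sqrt_le_sqrt hsum
    _ = Real.sqrt d / 2 := by
        rw [show ((d : ℝ) / 4) = d * (1 / 2) ^ 2 by ring,
          Real.sqrt_mul (Nat.cast_nonneg d), Real.sqrt_sq (by norm_num)]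
        ring
/-- Lemma 5.1 (1): finding a lattice point deep inside a shifted cone. -/
theorem stmt14 (d : ℕ) (hd : 1 ≤ d) (ϑ : ℝ) (hϑ : ϑ ∈ Set.Ioc 0 (Real.pi / 2))
    (θ : ℝ) (hθ1 : ϑ ≤ θ) (hθ2 : θ ≤ Real.pi / 2) (v : Euc d) (hv : ‖v‖ = 1)
    (r R : ℝ) (hr : 0 < r) (hR : (r + Real.sqrt d) / Real.sin ϑ < R) (x : Euc d) :
    ∃ z : Fin d → ℤ, latt d z ∈ ball x R ∧ latt d z - x ∈ coneSet d v θ ∧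
      ∀ w ∈ Metric.closedBall (latt d z) r, w - x ∈ coneSet d v θ := by
  obtain ⟨hϑ0, hϑ2⟩ := hϑ
  have hθ0 : 0 < θ := lt_of_lt_of_le hϑ0 hθ1
  set s : ℝ := Real.sin ϑ with hs
  have hs0 : 0 < s :=
    Real.sin_pos_of_pos_of_lt_pi hϑ0 (lt_of_le_of_lt hϑ2 (by linarith [Real.pi_pos]))
  have hs1 : s ≤ 1 := Real.sin_le_one ϑ
  have hssin : s ≤ Real.sin θ :=
    Real.sin_le_sin_of_le_of_le_pi_div_two (by linarith) hθ2 hθ1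
  have hsd : (0 : ℝ) ≤ Real.sqrt d := Real.sqrt_nonneg d
  set T : ℝ := (r + Real.sqrt d) / s with hT
  set δ : ℝ := (R - T) / 2 with hδ
  have hδ0 : 0 < δ := by rw [hδ]; linarith
  set t : ℝ := (r + Real.sqrt d / 2) / s + δ with ht
  have ht0 : 0 < t := by positivity
  set ρ : ℝ := r + Real.sqrt d / 2 with hρdef
  have hρ0 : 0 ≤ ρ := by positivity
  have hts : ρ < t * s := by
    rw [ht]
    rw [add_mul, div_mul_cancel₀ _ hs0.ne']
    nlinarith
  have htsin : ρ < t * Real.sin θ := by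
    calc ρ < t * s := hts
      _ ≤ t * Real.sin θ := by nlinarith
  set c : Euc d := x + t • v with hc
  set z : Fin d → ℤ := fun i => round (c i) with hz
  have hzc : ‖latt d z - c‖ ≤ Real.sqrt d / 2 := norm_latt_round_sub_le d c
  have hkey : ∀ w : Euc d, dist w (latt d z) ≤ r → w - x ∈ coneSet d v θ := by
    intro w hw
    apply mem_coneSet_of_close d v hv θ hθ0 hθ2 t ρ hρ0 htsin
    have heq : w - x - t • v = (w - latt d z) + (latt d z - c) := by
      rw [hc]; abel
    rw [heq]
    calc ‖(w - latt d z) + (latt d z - c)‖ ≤ ‖w - latt d z‖ + ‖latt d z - c‖ :=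
          norm_add_le _ _
      _ ≤ r + Real.sqrt d / 2 := by
          rw [dist_eq_norm] at hw; linarith
  refine ⟨z, ?_, ?_, fun w hw => hkey w (mem_closedBall.mp hw)⟩
  · rw [mem_ball, dist_eq_norm]
    have heq : latt d z - x = (latt d z - c) + t • v := by rw [hc]; abel
    have h1 : ‖latt d z - x‖ ≤ Real.sqrt d / 2 + t := by
      rw [heq]
      calc ‖(latt d z - c) + t • v‖ ≤ ‖latt d z - c‖ + ‖t • v‖ := norm_add_le _ _
        _ = ‖latt d z - c‖ + t := by rw [norm_smul, hv, mul_one, Real.norm_eq_abs,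
            abs_of_pos ht0]
        _ ≤ Real.sqrt d / 2 + t := by linarith
    have h2 : Real.sqrt d / 2 ≤ (Real.sqrt d / 2) / s := by
      rw [le_div_iff₀ hs0]; nlinarith
    have h3 : (r + Real.sqrt d / 2) / s + (Real.sqrt d / 2) / s = T := by
      rw [hT, ← add_div]; ring_nf
    have : t + Real.sqrt d / 2 < R := by
      rw [ht]
      have : (r + Real.sqrt d / 2) / s + δ + Real.sqrt d / 2
          ≤ T + δ := by rw [← h3]; linarith
      rw [hδ] at this ⊢
      linarith
    linarith
  · exact hkey (latt d z) (by simp [dist_self, hr.le])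
end
end

section
/- Let d ≥ 1, ϑ ∈ (0, π/2], and let C̃ = Ṽ(v,θ) be a cone with apex angle θ ≥ ϑ. Let x, y ∈ ℝ^d, fix r > |x − y| and assume R > (r + √d)/sin(ϑ) + r. Then the intersection B_R(x) ∩ (x + C̃) ∩ B_R(y) ∩ (y + C̃) contains a lattice point of ℤ^d. -/
set_option maxHeartbeats 1000000


open MeasureTheory Metric
open scoped ENNReal

noncomputable section

open scoped RealInnerProductSpace in
/-- If `w` is within distance `c * sin θ` of the axis point `c • v`, then `w` lies in the
open cone of apex angle `θ` around `v`. -/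
lemma mem_coneSet_of_close_s15 (d : ℕ) (v : Euc d) (hv : ‖v‖ = 1) {θ c : ℝ}
    (hθ1 : 0 < θ) (hθ2 : θ ≤ Real.pi / 2) (hc : 0 < c)
    (w : Euc d) (hw : ‖w - c • v‖ < c * Real.sin θ) :
    w ∈ coneSet d v θ := by
  set e : Euc d := w - c • v with he
  set a : ℝ := ⟪v, e⟫ with ha
  set ε : ℝ := ‖e‖ with hε
  have hεnn : 0 ≤ ε := norm_nonneg _
  have habs : |a| ≤ ε := by
    calc |a| ≤ ‖v‖ * ‖e‖ := abs_real_inner_le_norm v e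
    _ = ε := by rw [hv, one_mul]
  have hweq : w = c • v + e := by rw [he]; abel
  set S : ℝ := Real.sin θ with hS
  set C : ℝ := Real.cos θ with hC
  have hS0 : 0 < S := Real.sin_pos_of_pos_of_lt_pi hθ1 (by linarith [Real.pi_pos])
  have hC0 : 0 ≤ C := Real.cos_nonneg_of_mem_Icc ⟨by linarith, hθ2⟩
  have hC2 : C ^ 2 = 1 - S ^ 2 := by
    have := Real.sin_sq_add_cos_sq θ; rw [hS, hC]; linarith
  have hεc : ε < c * S := hw
  have hvw : ⟪v, w⟫ = c + a := by
    rw [hweq, inner_add_right, real_inner_smul_right, real_inner_self_eq_norm_sq, hv]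
    ring
  have habs' : -ε ≤ a := (abs_le.mp habs).1
  have hSle : S ≤ 1 := Real.sin_le_one θ
  have innpos : 0 < c + a := by nlinarith
  have hw0 : w ≠ 0 := by
    intro h0
    rw [h0, inner_zero_right] at hvw
    linarith
  have hnpos : 0 < ‖w‖ := norm_pos_iff.mpr hw0
  have hw2 : ‖w‖ ^ 2 = c ^ 2 + 2 * c * a + ε ^ 2 := by
    rw [hweq, @norm_add_sq_real, real_inner_smul_left, norm_smul, Real.norm_eq_abs,
      abs_of_pos hc, hv]
    rw [← ha, ← hε]; ring
  have hdiff : 0 < c ^ 2 * S ^ 2 - ε ^ 2 := by nlinarith [mul_pos hc hS0]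
  have hsq : (C * ‖w‖) ^ 2 < (c + a) ^ 2 := by
    have hid : (c + a) ^ 2 - C ^ 2 * (c ^ 2 + 2 * c * a + ε ^ 2)
        = (a + S ^ 2 * c) ^ 2 + C ^ 2 * (c ^ 2 * S ^ 2 - ε ^ 2) := by
      rw [hC2]; ring
    have hCw : (C * ‖w‖) ^ 2 = C ^ 2 * (c ^ 2 + 2 * c * a + ε ^ 2) := by
      rw [mul_pow, hw2]
    rw [hCw]
    rcases hC0.eq_or_lt with h | h
    · rw [← h]
      nlinarith
    · have h2 : 0 < C ^ 2 * (c ^ 2 * S ^ 2 - ε ^ 2) := mul_pos (pow_pos h 2) hdiff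
      linarith [sq_nonneg (a + S ^ 2 * c)]
  have hfin : C * ‖w‖ < c + a := by
    nlinarith [mul_nonneg hC0 (norm_nonneg w)]
  refine ⟨hw0, ?_⟩
  show C < (inner ℝ v w : ℝ) / ‖w‖
  rw [show (inner ℝ v w : ℝ) = ⟪v, w⟫ from rfl, hvw, lt_div_iff₀ hnpos]
  exact hfin

/-- Every point of `ℝ^d` is within `√d / 2` of a lattice point. -/
lemma exists_latt_close (d : ℕ) (p : Euc d) :
    ∃ z : Fin d → ℤ, ‖latt d z - p‖ ≤ Real.sqrt d / 2 := by
  refine ⟨fun i => round (p i), ?_⟩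
  have hcoord : ∀ i, |(latt d (fun i => round (p i)) - p) i| ≤ 1 / 2 := by
    intro i
    have : (latt d (fun i => round (p i)) - p) i = (round (p i) : ℝ) - p i := by
      simp [latt]
    rw [this, abs_sub_comm]
    exact abs_sub_round (p i)
  rw [EuclideanSpace.norm_eq]
  have hsum : ∑ i, ‖(latt d (fun i => round (p i)) - p) i‖ ^ 2 ≤ (d : ℝ) / 4 := by
    calc ∑ i, ‖(latt d (fun i => round (p i)) - p) i‖ ^ 2
        ≤ ∑ _i : Fin d, (1 / 2 : ℝ) ^ 2 := by
          refine Finset.sum_le_sum fun i _ => ?_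
          rw [Real.norm_eq_abs]
          have := hcoord i
          nlinarith [abs_nonneg ((latt d (fun i => round (p i)) - p) i)]
      _ = (d : ℝ) / 4 := by simp [Finset.sum_const]; ring
  calc Real.sqrt (∑ i, ‖(latt d (fun i => round (p i)) - p) i‖ ^ 2)
      ≤ Real.sqrt ((d : ℝ) / 4) := Real.sqrt_le_sqrt hsum
    _ = Real.sqrt d / 2 := by
        rw [show (d : ℝ) / 4 = d * (1 / 2) ^ 2 by ring,
          Real.sqrt_mul (by positivity), Real.sqrt_sq (by norm_num)]
        ring

/-- Lemma 5.1 (2): a lattice point in the intersection of two shifted cones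
with nearby apexes. -/
theorem stmt15 (d : ℕ) (hd : 1 ≤ d) (ϑ : ℝ) (hϑ : ϑ ∈ Set.Ioc 0 (Real.pi / 2))
    (θ : ℝ) (hθ1 : ϑ ≤ θ) (hθ2 : θ ≤ Real.pi / 2) (v : Euc d) (hv : ‖v‖ = 1)
    (x y : Euc d) (r R : ℝ) (hr : dist x y < r)
    (hR : (r + Real.sqrt d) / Real.sin ϑ + r < R) :
    ∃ z : Fin d → ℤ, latt d z ∈ ball x R ∧ latt d z - x ∈ coneSet d v θ ∧
      latt d z ∈ ball y R ∧ latt d z - y ∈ coneSet d v θ := by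
  have hr0 : 0 < r := lt_of_le_of_lt dist_nonneg hr
  have hπ : 0 < Real.pi := Real.pi_pos
  have hθ0 : 0 < θ := lt_of_lt_of_le hϑ.1 hθ1
  have hsϑ : 0 < Real.sin ϑ := Real.sin_pos_of_pos_of_lt_pi hϑ.1 (by linarith [hϑ.2])
  have hs1 : Real.sin ϑ ≤ 1 := Real.sin_le_one ϑ
  have hsθ : Real.sin ϑ ≤ Real.sin θ :=
    Real.sin_le_sin_of_le_of_le_pi_div_two (by linarith [hϑ.1]) hθ2 hθ1
  have hd0 : (1 : ℝ) ≤ Real.sqrt d := by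
    rw [show (1 : ℝ) = Real.sqrt 1 by simp]
    exact Real.sqrt_le_sqrt (by exact_mod_cast hd)
  set c : ℝ := (r + Real.sqrt d / 2) / Real.sin ϑ with hcdef
  have hc : 0 < c := div_pos (by linarith) hsϑ
  have hcs : c * Real.sin ϑ = r + Real.sqrt d / 2 := div_mul_cancel₀ _ hsϑ.ne'
  have hcsθ : c * Real.sin ϑ ≤ c * Real.sin θ := mul_le_mul_of_nonneg_left hsθ hc.le
  obtain ⟨z, hz⟩ := exists_latt_close d (x + c • v)
  have hxy : ‖x - y‖ < r := by rw [← dist_eq_norm]; exact hr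
  -- cone membership at x
  have hconex : latt d z - x ∈ coneSet d v θ := by
    refine mem_coneSet_of_close_s15 d v hv hθ0 hθ2 hc _ ?_
    have : latt d z - x - c • v = latt d z - (x + c • v) := by abel
    rw [this]
    calc ‖latt d z - (x + c • v)‖ ≤ Real.sqrt d / 2 := hz
      _ < c * Real.sin ϑ := by rw [hcs]; linarith
      _ ≤ c * Real.sin θ := hcsθ
  -- cone membership at y
  have hconey : latt d z - y ∈ coneSet d v θ := by
    refine mem_coneSet_of_close_s15 d v hv hθ0 hθ2 hc _ ?_
    have : latt d z - y - c • v = (latt d z - (x + c • v)) + (x - y) := by abel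
    rw [this]
    calc ‖latt d z - (x + c • v) + (x - y)‖
        ≤ ‖latt d z - (x + c • v)‖ + ‖x - y‖ := norm_add_le _ _
      _ < Real.sqrt d / 2 + r := by linarith [hz]
      _ = c * Real.sin ϑ := by rw [hcs]; ring
      _ ≤ c * Real.sin θ := hcsθ
  -- distance bounds
  have hcv : ‖c • v‖ = c := by
    rw [norm_smul, Real.norm_eq_abs, abs_of_pos hc, hv, mul_one]
  have hcbound : c + Real.sqrt d / 2 ≤ (r + Real.sqrt d) / Real.sin ϑ := by
    rw [le_div_iff₀ hsϑ]
    have : (c + Real.sqrt d / 2) * Real.sin ϑ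
        = (r + Real.sqrt d / 2) + (Real.sqrt d / 2) * Real.sin ϑ := by
      rw [add_mul, hcs]
    rw [this]
    nlinarith
  have hdx : dist (latt d z) x < R := by
    rw [dist_eq_norm]
    calc ‖latt d z - x‖ = ‖(latt d z - (x + c • v)) + c • v‖ := by
          congr 1; abel
      _ ≤ ‖latt d z - (x + c • v)‖ + ‖c • v‖ := norm_add_le _ _
      _ ≤ Real.sqrt d / 2 + c := by rw [hcv]; linarith [hz]
      _ < R := by linarith
  have hdy : dist (latt d z) y < R := by
    rw [dist_eq_norm]
    calc ‖latt d z - y‖ = ‖(latt d z - (x + c • v)) + c • v + (x - y)‖ := by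
          congr 1; abel
      _ ≤ ‖(latt d z - (x + c • v)) + c • v‖ + ‖x - y‖ := norm_add_le _ _
      _ ≤ (‖latt d z - (x + c • v)‖ + ‖c • v‖) + ‖x - y‖ := by
          linarith [norm_add_le (latt d z - (x + c • v)) (c • v)]
      _ < (Real.sqrt d / 2 + c) + r := by rw [hcv]; linarith [hz]
      _ < R := by linarith
  exact ⟨z, mem_ball.mpr hdx, hconex, mem_ball.mpr hdy, hconey⟩
end
end

section
/- Let d ≥ 1, ϑ ∈ (0, π/2], and let Γ be a ϑ-bounded configuration. Let x, y ∈ ℤ^d satisfy Γ(x) = Γ(y) and |x − y| < r for some r > 0. Then for every R > (r + √d)/sin(ϑ) + r there exists a lattice point z ∈ ℤ^d with z ∈ x + Γ(x), z ∈ y + Γ(y), |z − x| < R and |z − y| < R; in particular x and y are connected in the graph G(Γ) by a path of two edges, each of length less than R. -/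
open MeasureTheory Metric
open scoped ENNReal

noncomputable section

lemma arith_key (sθ cθ t c u : ℝ) (hs : 0 < sθ) (hs1 : sθ ≤ 1) (hc : 0 ≤ cθ)
    (hsc : sθ ^ 2 + cθ ^ 2 = 1) (hu0 : 0 ≤ u) (hcu : |c| ≤ u) (he : u < t * sθ) :
    0 < t + c ∧ cθ * Real.sqrt ((t + c) ^ 2 + (u ^ 2 - c ^ 2)) < t + c := by
  have hcu' := abs_le.mp hcu
  have ht : 0 < t := by nlinarith
  have ha : 0 < t + c := by nlinarith
  have hw : 0 ≤ u ^ 2 - c ^ 2 := by nlinarith [sq_abs c]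
  set q : ℝ := Real.sqrt (u ^ 2 - c ^ 2) with hqdef
  have hq0 : 0 ≤ q := Real.sqrt_nonneg _
  have hq2 : q ^ 2 = u ^ 2 - c ^ 2 := Real.sq_sqrt hw
  have key1 : cθ * q - sθ * c ≤ u := by
    nlinarith [sq_nonneg (sθ * q + cθ * c), sq_nonneg (cθ * q - sθ * c - u)]
  have key2 : cθ * q < sθ * (t + c) := by nlinarith
  have hr : Real.sqrt ((t + c) ^ 2 + (u ^ 2 - c ^ 2)) ^ 2 = (t + c) ^ 2 + (u ^ 2 - c ^ 2) :=
    Real.sq_sqrt (by positivity)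
  have hr0 : 0 ≤ Real.sqrt ((t + c) ^ 2 + (u ^ 2 - c ^ 2)) := Real.sqrt_nonneg _
  refine ⟨ha, ?_⟩
  nlinarith [mul_nonneg hc hq0, mul_nonneg hs.le ha.le, mul_nonneg hc hr0]

lemma coneA {d : ℕ} (v : Euc d) (hv : ‖v‖ = 1) (θ : ℝ) (hθ1 : 0 < θ)
    (hθ2 : θ ≤ Real.pi / 2) (t : ℝ) (e : Euc d) (he : ‖e‖ < t * Real.sin θ) :
    t • v + e ∈ coneSet d v θ := by
  have hπ : θ < Real.pi := lt_of_le_of_lt hθ2 (by linarith [Real.pi_pos])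
  have hs : 0 < Real.sin θ := Real.sin_pos_of_pos_of_lt_pi hθ1 hπ
  have hc : 0 ≤ Real.cos θ := Real.cos_nonneg_of_mem_Icc ⟨by linarith, hθ2⟩
  have hcu : |(inner ℝ v e : ℝ)| ≤ ‖e‖ := by
    simpa [hv] using abs_real_inner_le_norm v e
  obtain ⟨ha, hkey⟩ := arith_key (Real.sin θ) (Real.cos θ) t (inner ℝ v e) ‖e‖ hs
    (Real.sin_le_one θ) hc (Real.sin_sq_add_cos_sq θ) (norm_nonneg e) hcu he
  have hinner : (inner ℝ v (t • v + e) : ℝ) = t + inner ℝ v e := by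
    rw [inner_add_right, real_inner_smul_right, real_inner_self_eq_norm_sq, hv]; ring
  have ht : 0 < t := by
    rcases mul_pos_iff.mp ((norm_nonneg e).trans_lt he) with ⟨h, _⟩ | ⟨_, h⟩
    · exact h
    · linarith
  have hnorm : ‖t • v + e‖ ^ 2 = (t + inner ℝ v e) ^ 2 + (‖e‖ ^ 2 - (inner ℝ v e : ℝ) ^ 2) := by
    have h1 : ‖t • v + e‖ ^ 2 = ‖t • v‖ ^ 2 + 2 * (inner ℝ (t • v) e : ℝ) + ‖e‖ ^ 2 :=
      norm_add_sq_real (t • v) e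
    have h2 : (inner ℝ (t • v) e : ℝ) = t * inner ℝ v e := real_inner_smul_left v e t
    have h3 : ‖t • v‖ = t := by
      rw [norm_smul, hv, Real.norm_eq_abs, abs_of_pos ht, mul_one]
    rw [h1, h2, h3]; ring
  have hne : ‖t • v + e‖ = Real.sqrt ((t + inner ℝ v e) ^ 2 + (‖e‖ ^ 2 - (inner ℝ v e : ℝ) ^ 2)) := by
    rw [← hnorm, Real.sqrt_sq (norm_nonneg _)]
  have hh0 : 0 < ‖t • v + e‖ := by
    have h4 := real_inner_le_norm v (t • v + e)
    rw [hinner, hv, one_mul] at h4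
    linarith
  refine ⟨by simpa [norm_pos_iff] using hh0, ?_⟩
  rw [hinner, lt_div_iff₀ hh0, hne]
  exact hkey

lemma roundB (d : ℕ) (p : Euc d) :
    ‖latt d (fun i => round (p i)) - p‖ ≤ Real.sqrt d / 2 := by
  have hcomp : ∀ i, ‖(latt d (fun i => round (p i)) - p) i‖ ≤ 1 / 2 := by
    intro i
    have h5 : (latt d (fun i => round (p i)) - p) i = (round (p i) : ℝ) - p i := by
      simp [latt]
    rw [h5, Real.norm_eq_abs]
    simpa [abs_sub_comm] using abs_sub_round (p i)
  rw [EuclideanSpace.norm_eq]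
  have hsum : (∑ i, ‖(latt d (fun i => round (p i)) - p) i‖ ^ 2) ≤ (d : ℝ) / 4 := by
    calc (∑ i, ‖(latt d (fun i => round (p i)) - p) i‖ ^ 2)
        ≤ ∑ _i : Fin d, (1 / 2 : ℝ) ^ 2 := by
          apply Finset.sum_le_sum
          intro i _
          have := hcomp i
          nlinarith [norm_nonneg ((latt d (fun i => round (p i)) - p) i)]
      _ = (d : ℝ) / 4 := by simp [Finset.sum_const]; ring
  calc Real.sqrt (∑ i, ‖(latt d (fun i => round (p i)) - p) i‖ ^ 2)
      ≤ Real.sqrt ((d : ℝ) / 4) := Real.sqrt_le_sqrt hsum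
    _ = Real.sqrt d / 2 := by
        rw [show ((d:ℝ)/4) = (Real.sqrt d / 2) ^ 2 by
              rw [div_pow, Real.sq_sqrt (by positivity : (0:ℝ) ≤ (d:ℝ))]; norm_num,
            Real.sqrt_sq (by positivity)]

/-- Corollary 5.2: two nearby lattice points of the same cone type are
connected in `G(Γ)` through a common lattice point of their shifted cones, via a path of two
edges each of length less than `R`. -/
theorem stmt16 (d : ℕ) (hd : 1 ≤ d) (ϑ : ℝ) (hϑ : ϑ ∈ Set.Ioc 0 (Real.pi / 2))
    (Γ : Config d) (hΓ : Γ.Bounded ϑ) (x y : Fin d → ℤ) (r : ℝ) (hr : 0 < r)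
    (hsame : Γ.cone (latt d x) = Γ.cone (latt d y))
    (hdist : dist (latt d x) (latt d y) < r)
    (R : ℝ) (hR : (r + Real.sqrt d) / Real.sin ϑ + r < R) :
    ∃ z : Fin d → ℤ,
      latt d z - latt d x ∈ Γ.cone (latt d x) ∧
      latt d z - latt d y ∈ Γ.cone (latt d y) ∧
      dist (latt d z) (latt d x) < R ∧ dist (latt d z) (latt d y) < R ∧
      adjL d Γ x z ∧ adjL d Γ z y := by
  set X := latt d x with hX
  set Y := latt d y with hY
  set v := Γ.axis X with hv
  set θ := Γ.angle X with hθdef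
  obtain ⟨hθ1, hθ2⟩ := Γ.angle_mem X
  have hϑθ : ϑ ≤ θ := hΓ X
  have hπ : ϑ < Real.pi := lt_of_le_of_lt hϑ.2 (by linarith [Real.pi_pos])
  have hsϑ : 0 < Real.sin ϑ := Real.sin_pos_of_pos_of_lt_pi hϑ.1 hπ
  have hs1 : Real.sin ϑ ≤ 1 := Real.sin_le_one ϑ
  have hsinle : Real.sin ϑ ≤ Real.sin θ :=
    Real.sin_le_sin_of_le_of_le_pi_div_two (by linarith [Real.pi_pos, hϑ.1]) hθ2 hϑθ
  have hsd : 1 ≤ Real.sqrt d := by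
    rw [show (1:ℝ) = Real.sqrt 1 by simp]
    exact Real.sqrt_le_sqrt (by exact_mod_cast hd)
  set sd := Real.sqrt d with hsddef
  set t := (r + sd / 2) / Real.sin ϑ with htdef
  have htpos : 0 < t := by positivity
  have htsin : t * Real.sin ϑ = r + sd / 2 := div_mul_cancel₀ _ hsϑ.ne'
  have htsinθ : r + sd / 2 ≤ t * Real.sin θ := by
    rw [← htsin]
    exact mul_le_mul_of_nonneg_left hsinle htpos.le
  set p : Euc d := X + t • v with hp
  refine ⟨fun i => round (p i), ?_⟩
  set z := latt d (fun i => round (p i)) with hz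
  set e : Euc d := z - p with he
  have hebound : ‖e‖ ≤ sd / 2 := roundB d p
  set e' : Euc d := e + (X - Y) with he'
  have he'bound : ‖e'‖ < sd / 2 + r := by
    calc ‖e'‖ ≤ ‖e‖ + ‖X - Y‖ := norm_add_le e (X - Y)
      _ < sd / 2 + r := by
          have : ‖X - Y‖ < r := by rwa [← dist_eq_norm]
          linarith
  have hx' : z - X = t • v + e := by rw [he, hp]; abel
  have hy' : z - Y = t • v + e' := by rw [he', he, hp]; abel
  have hmemx : z - X ∈ coneSet d v θ := by
    rw [hx']
    exact coneA v (Γ.axis_norm X) θ hθ1 hθ2 t e (by linarith)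
  have hmemy : z - Y ∈ coneSet d v θ := by
    rw [hy']
    exact coneA v (Γ.axis_norm X) θ hθ1 hθ2 t e' (by linarith)
  have hconeX : z - X ∈ Γ.cone X := Or.inl hmemx
  have hconeY : z - Y ∈ Γ.cone Y := by
    rw [← hsame]
    exact Or.inl hmemy
  have htv : ‖t • v‖ = t := by
    rw [norm_smul, Γ.axis_norm X, Real.norm_eq_abs, abs_of_pos htpos, mul_one]
  have hbudget : t + sd / 2 + r ≤ (r + sd) / Real.sin ϑ + r := by
    have h7 : (r + sd) / Real.sin ϑ = t + (sd / 2) / Real.sin ϑ := by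
      rw [htdef]; ring
    have h8 : sd / 2 ≤ (sd / 2) / Real.sin ϑ := by
      rw [le_div_iff₀ hsϑ]
      nlinarith
    linarith
  have hdx : dist z X < R := by
    rw [dist_eq_norm, hx']
    calc ‖t • v + e‖ ≤ ‖t • v‖ + ‖e‖ := norm_add_le _ _
      _ ≤ t + sd / 2 := by rw [htv]; linarith
      _ < R := by linarith
  have hdy : dist z Y < R := by
    rw [dist_eq_norm, hy']
    calc ‖t • v + e'‖ ≤ ‖t • v‖ + ‖e'‖ := norm_add_le _ _
      _ < t + (sd / 2 + r) := by rw [htv]; linarith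
      _ < R := by linarith
  exact ⟨hconeX, hconeY, hdx, hdy, Or.inl hconeX, Or.inr hconeY⟩
end
end

section
/- Let d ≥ 1 and ϑ ∈ (0, π/2]. For every r > 0 there exists R ≥ r, depending only on r, ϑ and the dimension d, such that for every ϑ-bounded configuration Γ every lattice point x ∈ ℤ^d is r-R-connected in the graph G(Γ). -/
set_option maxHeartbeats 1000000


open MeasureTheory Metric
open scoped ENNReal

noncomputable section

/-- distance constant √d -/
def sdC (d : ℕ) : ℝ := Real.sqrt d
/-- step length -/
def lamC (d : ℕ) (ϑ : ℝ) : ℝ :=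
  (sdC d + 1) * (2/(Real.cos (ϑ/2) - Real.cos ϑ) + 2/Real.sin (ϑ/2) + 2)
/-- per-step gain -/
def muC (d : ℕ) (ϑ : ℝ) : ℝ := 2 * lamC d ϑ * Real.sin (ϑ/2) - sdC d
/-- stopping radius -/
def D0C (d : ℕ) (ϑ : ℝ) : ℝ := (2*lamC d ϑ + sdC d)^2 / muC d ϑ
/-- target depth -/
def TTC (d : ℕ) (ϑ : ℝ) : ℝ := 2 * D0C d ϑ / (1 - Real.cos ϑ) + D0C d ϑ + 1

theorem constsFacts (d : ℕ) (ϑ : ℝ) (hϑ0 : 0 < ϑ) (hϑ2 : ϑ ≤ Real.pi/2) :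
    0 < Real.sin (ϑ/2) ∧ 0 < Real.cos (ϑ/2) ∧ 0 ≤ Real.cos ϑ ∧ Real.cos ϑ < Real.cos (ϑ/2) ∧
    Real.cos ϑ < 1 ∧ 0 < lamC d ϑ ∧ 3*sdC d + 4 ≤ muC d ϑ ∧
    Real.cos ϑ * (2*lamC d ϑ + sdC d) < 2*lamC d ϑ*Real.cos (ϑ/2) - sdC d ∧
    muC d ϑ ≤ D0C d ϑ ∧ D0C d ϑ * muC d ϑ = (2*lamC d ϑ + sdC d)^2 ∧
    D0C d ϑ + 1 ≤ TTC d ϑ ∧ Real.cos ϑ * (TTC d ϑ + D0C d ϑ) < TTC d ϑ - D0C d ϑ := by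
  have hpi : (2:ℝ) ≤ Real.pi := by linarith [Real.pi_gt_three]
  have hϑpi : ϑ ≤ Real.pi := by linarith
  have hs2 : 0 < Real.sin (ϑ/2) := Real.sin_pos_of_pos_of_lt_pi (by linarith) (by linarith)
  have hc2 : 0 < Real.cos (ϑ/2) := Real.cos_pos_of_mem_Ioo ⟨by linarith [Real.pi_pos], by linarith⟩
  have hc0 : 0 ≤ Real.cos ϑ := Real.cos_nonneg_of_mem_Icc ⟨by linarith, hϑ2⟩
  have hδ : Real.cos ϑ < Real.cos (ϑ/2) := Real.cos_lt_cos_of_nonneg_of_le_pi (by linarith) hϑpi (by linarith)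
  have hc1 : Real.cos ϑ < 1 := by
    have := Real.cos_lt_cos_of_nonneg_of_le_pi (le_refl 0) hϑpi hϑ0
    simpa using this
  have hs21 : Real.sin (ϑ/2) ≤ 1 := Real.sin_le_one _
  have hc21 : Real.cos (ϑ/2) ≤ 1 := Real.cos_le_one _
  have hsd : 0 ≤ sdC d := Real.sqrt_nonneg _
  set sd := sdC d
  set s₂ := Real.sin (ϑ/2)
  set c₂ := Real.cos (ϑ/2)
  set cϑ := Real.cos ϑ
  have hδpos : 0 < c₂ - cϑ := by linarith
  have e1 : 2/(c₂ - cϑ) * (c₂ - cϑ) = 2 := div_mul_cancel₀ _ (ne_of_gt hδpos)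
  have e2 : 2/s₂ * s₂ = 2 := div_mul_cancel₀ _ (ne_of_gt hs2)
  have hA : 0 < 2/(c₂-cϑ) := by positivity
  have hB : 0 < 2/s₂ := by positivity
  have hlam : 0 < lamC d ϑ := by
    have : lamC d ϑ = (sd + 1) * (2/(c₂-cϑ) + 2/s₂ + 2) := rfl
    rw [this]; positivity
  set lam := lamC d ϑ with hlamdef
  have hlδ : 2*(sd+1) ≤ lam * (c₂ - cϑ) := by
    have : lam * (c₂-cϑ) = (sd+1)*(2/(c₂-cϑ)*(c₂-cϑ)) + (sd+1)*(2/s₂ + 2)*(c₂-cϑ) := by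
      rw [hlamdef]; unfold lamC; ring
    rw [this, e1]
    nlinarith [mul_nonneg (mul_nonneg (by linarith : (0:ℝ) ≤ sd+1) (by linarith : (0:ℝ) ≤ 2/s₂+2)) hδpos.le]
  have hls : 2*(sd+1) ≤ lam * s₂ := by
    have : lam * s₂ = (sd+1)*(2/s₂*s₂) + (sd+1)*(2/(c₂-cϑ) + 2)*s₂ := by
      rw [hlamdef]; unfold lamC; ring
    rw [this, e2]
    nlinarith [mul_nonneg (mul_nonneg (by linarith : (0:ℝ) ≤ sd+1) (by linarith : (0:ℝ) ≤ 2/(c₂-cϑ)+2)) hs2.le]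
  have hmu : 3*sd + 4 ≤ muC d ϑ := by
    have : muC d ϑ = 2*(lam*s₂) - sd := by unfold muC; ring
    rw [this]; linarith
  set mu := muC d ϑ with hmudef
  have hmupos : 0 < mu := by linarith
  have key1 : cϑ * (2*lam + sd) < 2*lam*c₂ - sd := by
    have h1 : cϑ * (2*lam+sd) ≤ 2*lam*cϑ + sd := by nlinarith
    nlinarith
  have hmule : mu ≤ 2*lam + sd := by
    have : mu = 2*lam*s₂ - sd := rfl
    nlinarith
  have hD0mul : D0C d ϑ * mu = (2*lam + sd)^2 := div_mul_cancel₀ _ (ne_of_gt hmupos)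
  have hD0 : mu ≤ D0C d ϑ := by
    have hd : D0C d ϑ = (2*lam+sd)^2/mu := rfl
    rw [hd, le_div_iff₀ hmupos]
    nlinarith
  set D0 := D0C d ϑ with hD0def
  have hD0pos : 0 < D0 := lt_of_lt_of_le hmupos hD0
  have hcne : (0:ℝ) < 1 - cϑ := by linarith
  have eT : 2*D0/(1-cϑ) * (1-cϑ) = 2*D0 := div_mul_cancel₀ _ (ne_of_gt hcne)
  have hT1 : D0 + 1 ≤ TTC d ϑ := by
    have : TTC d ϑ = 2*D0/(1-cϑ) + D0 + 1 := rfl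
    rw [this]
    have : 0 ≤ 2*D0/(1-cϑ) := by positivity
    linarith
  set T := TTC d ϑ with hTdef
  have key2 : cϑ * (T + D0) < T - D0 := by
    have hTexp : T * (1-cϑ) = 2*D0 + (D0+1)*(1-cϑ) := by
      rw [hTdef]; unfold TTC
      rw [show (2*D0/(1-cϑ) + D0 + 1) * (1-cϑ) = 2*D0/(1-cϑ)*(1-cϑ) + (D0+1)*(1-cϑ) by ring, eT]
    have h3 : D0*cϑ ≤ D0 := mul_le_of_le_one_right hD0pos.le hc1.le
    have h4 : 0 < (D0+1)*(1-cϑ) := mul_pos (by linarith) hcne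
    nlinarith [hTexp, h3, h4]
  exact ⟨hs2, hc2, hc0, hδ, hc1, hlam, hmu, key1, hD0, hD0mul, hT1, key2⟩


theorem lattice_round (d : ℕ) (Y : Euc d) :
    ∃ z : Fin d → ℤ, dist (latt d z) Y ≤ sdC d := by
  refine ⟨fun i => round (Y i), ?_⟩
  rw [EuclideanSpace.dist_eq]
  have h1 : ∑ i, dist ((latt d (fun i => round (Y i))) i) (Y i) ^ 2 ≤ ∑ _i : Fin d, (1/2:ℝ)^2 := by
    apply Finset.sum_le_sum
    intro i _
    have : dist ((latt d (fun i => round (Y i))) i) (Y i) = |(round (Y i) : ℝ) - Y i| := by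
      rw [Real.dist_eq]; rfl
    rw [this]
    have h2 : |(round (Y i) : ℝ) - Y i| ≤ 1/2 := by
      rw [abs_sub_comm]; exact abs_sub_round (Y i)
    have h0 : (0:ℝ) ≤ |(round (Y i) : ℝ) - Y i| := abs_nonneg _
    nlinarith
  have h2 : ∑ _i : Fin d, (1/2:ℝ)^2 = d * (1/4) := by
    rw [Finset.sum_const, Finset.card_univ, Fintype.card_fin, nsmul_eq_mul]; ring
  calc Real.sqrt (∑ i, dist ((latt d (fun i => round (Y i))) i) (Y i) ^ 2)
      ≤ Real.sqrt (d * (1/4)) := Real.sqrt_le_sqrt (by rw [← h2]; exact h1)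
    _ ≤ Real.sqrt d := Real.sqrt_le_sqrt (by have h3 : (0:ℝ) ≤ (d:ℝ) := Nat.cast_nonneg d; linarith)

theorem exists_dir_aux (d : ℕ) (θ : ℝ) (hθ0 : 0 < θ) (hθ4 : θ ≤ Real.pi/4)
    (b n : Euc d) (hb : ‖b‖ = 1) (hn : ‖n‖ = 1) (ht : 0 ≤ (inner ℝ b n : ℝ)) :
    ∃ u : Euc d, ‖u‖ = 1 ∧ Real.cos θ ≤ (inner ℝ b u : ℝ) ∧ Real.sin θ ≤ (inner ℝ u n : ℝ) := by
  have hpi : (2:ℝ) ≤ Real.pi := by linarith [Real.pi_gt_three]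
  set t := (inner ℝ b n : ℝ) with htdef
  have ht1 : t ≤ 1 := by
    have := real_inner_le_norm b n; rw [hb, hn] at this; linarith
  have hbb : (inner ℝ b b : ℝ) = 1 := by
    rw [real_inner_self_eq_norm_mul_norm, hb]; ring
  have hnn : (inner ℝ n n : ℝ) = 1 := by
    rw [real_inner_self_eq_norm_mul_norm, hn]; ring
  set m0 := n - t • b with hm0def
  have hbm : (inner ℝ b m0 : ℝ) = 0 := by
    rw [hm0def, inner_sub_right, real_inner_smul_right, hbb]; ring
  have hmn : (inner ℝ m0 n : ℝ) = 1 - t^2 := by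
    have hnb : (inner ℝ n b : ℝ) = t := by rw [real_inner_comm]
    rw [hm0def, inner_sub_left, real_inner_smul_left, hnn, ← htdef]
    ring
  have hmm : ‖m0‖^2 = 1 - t^2 := by
    rw [← real_inner_self_eq_norm_sq, hm0def, inner_sub_right, inner_smul_right]
    rw [← hm0def, hmn]
    have h9 : (inner ℝ m0 b : ℝ) = 0 := by rw [real_inner_comm]; exact hbm
    rw [h9]; ring
  have hcθ : 0 ≤ Real.cos θ := Real.cos_nonneg_of_mem_Icc ⟨by linarith, by linarith⟩
  have hsθ : 0 ≤ Real.sin θ := Real.sin_nonneg_of_nonneg_of_le_pi (by linarith) (by linarith)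
  have hcs : Real.sin θ ≤ Real.cos θ := by
    rw [← Real.cos_pi_div_two_sub]
    exact Real.cos_le_cos_of_nonneg_of_le_pi (by linarith) (by linarith) (by linarith)
  by_cases hm : m0 = 0
  · have h1 : t^2 = 1 := by
      rw [hm] at hmm; simp at hmm; linarith
    have ht' : t = 1 := by nlinarith
    refine ⟨b, hb, by rw [hbb]; exact Real.cos_le_one θ, ?_⟩
    rw [← htdef, ht']; exact Real.sin_le_one θ
  · have hm0 : 0 < ‖m0‖ := norm_pos_iff.mpr hm
    set m := ‖m0‖⁻¹ • m0 with hmdef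
    have hmnorm : ‖m‖ = 1 := norm_smul_inv_norm hm
    have hbm' : (inner ℝ b m : ℝ) = 0 := by
      rw [hmdef, real_inner_smul_right, hbm]; ring
    have hmn' : (inner ℝ m n : ℝ) = ‖m0‖ := by
      rw [hmdef, real_inner_smul_left, hmn, ← hmm]
      field_simp
    set u := Real.cos θ • b + Real.sin θ • m with hudef
    have hu2 : ‖u‖^2 = 1 := by
      rw [hudef, norm_add_sq_real, real_inner_smul_left, real_inner_smul_right, hbm']
      rw [norm_smul, norm_smul, hb, hmnorm]
      simp [abs_of_nonneg hcθ, abs_of_nonneg hsθ]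
    have hu : ‖u‖ = 1 := by
      have := Real.sqrt_sq (norm_nonneg u)
      rw [hu2] at this; rw [← this, Real.sqrt_one]
    have hbu : (inner ℝ b u : ℝ) = Real.cos θ := by
      rw [hudef, inner_add_right, real_inner_smul_right, real_inner_smul_right, hbb, hbm']
      ring
    have hun : (inner ℝ u n : ℝ) = Real.cos θ * t + Real.sin θ * ‖m0‖ := by
      rw [hudef, inner_add_left, real_inner_smul_left, real_inner_smul_left, hmn']
    refine ⟨u, hu, le_of_eq hbu.symm, ?_⟩
    rw [hun]
    have hs0 : 0 ≤ ‖m0‖ := hm0.le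
    have hs1 : ‖m0‖ ≤ 1 := by nlinarith
    nlinarith [mul_nonneg (sub_nonneg.2 hcs) ht,
      mul_nonneg hsθ (mul_nonneg ht (sub_nonneg.2 ht1)),
      mul_nonneg hsθ (mul_nonneg hs0 (sub_nonneg.2 hs1))]

theorem exists_dir (d : ℕ) (ϑ : ℝ) (hϑ0 : 0 < ϑ) (hϑ2 : ϑ ≤ Real.pi/2)
    (b n : Euc d) (hb : ‖b‖ = 1) (hn : ‖n‖ = 1) :
    ∃ b' u : Euc d, (b' = b ∨ b' = -b) ∧ ‖u‖ = 1 ∧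
      Real.cos (ϑ/2) ≤ (inner ℝ b' u : ℝ) ∧ Real.sin (ϑ/2) ≤ (inner ℝ u n : ℝ) := by
  by_cases ht : 0 ≤ (inner ℝ b n : ℝ)
  · obtain ⟨u, h1, h2, h3⟩ := exists_dir_aux d (ϑ/2) (by linarith) (by linarith) b n hb hn ht
    exact ⟨b, u, Or.inl rfl, h1, h2, h3⟩
  · have ht' : 0 ≤ (inner ℝ (-b) n : ℝ) := by
      rw [inner_neg_left]; push_neg at ht; linarith
    obtain ⟨u, h1, h2, h3⟩ := exists_dir_aux d (ϑ/2) (by linarith) (by linarith) (-b) n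
      (by rw [norm_neg]; exact hb) hn ht'
    exact ⟨-b, u, Or.inr rfl, h1, h2, h3⟩

theorem mem_cone_aux (d : ℕ) (ϑ : ℝ) (hϑ0 : 0 < ϑ) (hϑ2 : ϑ ≤ Real.pi / 2)
    (Γ : Config d) (hΓ : Γ.Bounded ϑ) (w ξ b' : Euc d)
    (hb' : b' = Γ.axis w ∨ b' = -Γ.axis w)
    (h : Real.cos ϑ * ‖ξ‖ < (inner ℝ b' ξ : ℝ)) : ξ ∈ Γ.cone w := by
  have hξ0 : ξ ≠ 0 := by
    rintro rfl
    rw [inner_zero_right, norm_zero, mul_zero] at h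
    exact lt_irrefl 0 h
  have hnorm : 0 < ‖ξ‖ := norm_pos_iff.mpr hξ0
  have hpi : ϑ ≤ Real.pi := by linarith [Real.pi_pos]
  have hangle : Real.cos (Γ.angle w) ≤ Real.cos ϑ := by
    have h1 := (Γ.angle_mem w).2
    have h2 := Real.pi_pos
    exact Real.cos_le_cos_of_nonneg_of_le_pi hϑ0.le (by linarith) (hΓ w)
  have key : Real.cos (Γ.angle w) < (inner ℝ b' ξ : ℝ) / ‖ξ‖ := by
    rw [lt_div_iff₀ hnorm]
    nlinarith [mul_le_mul_of_nonneg_right hangle hnorm.le]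
  rcases hb' with rfl | hbneg
  · exact Or.inl ⟨hξ0, key⟩
  · refine Or.inr ⟨neg_ne_zero.mpr hξ0, ?_⟩
    have h2 : (inner ℝ (Γ.axis w) (-ξ) : ℝ) = (inner ℝ b' ξ : ℝ) := by
      rw [hbneg, inner_neg_right, inner_neg_left]
    rw [norm_neg, h2]
    exact key

theorem step_lemma (d : ℕ) (ϑ : ℝ) (hϑ0 : 0 < ϑ) (hϑ2 : ϑ ≤ Real.pi / 2)
    (Γ : Config d) (hΓ : Γ.Bounded ϑ) (p : Fin d → ℤ) (Y : Euc d)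
    (hD : D0C d ϑ ≤ dist (latt d p) Y) :
    ∃ p' : Fin d → ℤ, adjL d Γ p p' ∧
      dist (latt d p') Y ≤ dist (latt d p) Y - muC d ϑ / 2 := by
  obtain ⟨hs2, hc2, hc0, hδ, hc1, hlam, hmu, key1, hD0ge, hD0mul, hT1, key2⟩ :=
    constsFacts d ϑ hϑ0 hϑ2
  have hsd : 0 ≤ sdC d := Real.sqrt_nonneg _
  set sd := sdC d
  set lam := lamC d ϑ
  set mu := muC d ϑ
  set c₂ := Real.cos (ϑ/2)
  set s₂ := Real.sin (ϑ/2)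
  have hmupos : 0 < mu := by linarith
  set D := dist (latt d p) Y with hDdef
  have hD0pos : 0 < D0C d ϑ := lt_of_lt_of_le hmupos hD0ge
  have hDpos : 0 < D := lt_of_lt_of_le hD0pos hD
  set b := Γ.axis (latt d p) with hbdef
  have hb : ‖b‖ = 1 := Γ.axis_norm _
  set nvec := D⁻¹ • (Y - latt d p) with hnvecdef
  have hYmp : ‖Y - latt d p‖ = D := by rw [hDdef, dist_comm, dist_eq_norm]
  have hn : ‖nvec‖ = 1 := by
    rw [hnvecdef, norm_smul, Real.norm_eq_abs, hYmp, abs_of_pos (inv_pos.mpr hDpos),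
      inv_mul_cancel₀ (ne_of_gt hDpos)]
  obtain ⟨b', u, hb'mem, hu, hcu, hun⟩ := exists_dir d ϑ hϑ0 hϑ2 b nvec hb hn
  have hb'norm : ‖b'‖ = 1 := by rcases hb'mem with rfl | rfl <;> simp [hb]
  obtain ⟨p', hp'⟩ := lattice_round d (latt d p + (2*lam) • u)
  set η := latt d p' - (latt d p + (2*lam) • u) with hηdef
  have hη : ‖η‖ ≤ sd := by rw [hηdef, ← dist_eq_norm]; exact hp'
  set ξ := latt d p' - latt d p with hξdef
  have hξ : ξ = (2*lam) • u + η := by rw [hξdef, hηdef]; abel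
  have hinb : 2*lam*c₂ - sd ≤ (inner ℝ b' ξ : ℝ) := by
    rw [hξ, inner_add_right, real_inner_smul_right]
    have h1 : -(‖b'‖ * ‖η‖) ≤ (inner ℝ b' η : ℝ) :=
      neg_le_of_abs_le (abs_real_inner_le_norm b' η)
    rw [hb'norm, one_mul] at h1
    nlinarith
  have hinn : mu ≤ (inner ℝ ξ nvec : ℝ) := by
    rw [hξ, inner_add_left, real_inner_smul_left]
    have h1 : -(‖η‖ * ‖nvec‖) ≤ (inner ℝ η nvec : ℝ) :=
      neg_le_of_abs_le (abs_real_inner_le_norm η nvec)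
    rw [hn, mul_one] at h1
    have h2 : mu = 2*lam*s₂ - sd := rfl
    nlinarith
  have hnξ : ‖ξ‖ ≤ 2*lam + sd := by
    rw [hξ]
    calc ‖(2*lam) • u + η‖ ≤ ‖(2*lam) • u‖ + ‖η‖ := norm_add_le _ _
      _ ≤ 2*lam + sd := by
          rw [norm_smul, Real.norm_eq_abs, hu, mul_one, abs_of_pos (by linarith : (0:ℝ) < 2*lam)]
          linarith
  have hcone : ξ ∈ Γ.cone (latt d p) := by
    apply mem_cone_aux d ϑ hϑ0 hϑ2 Γ hΓ _ _ b' (by rw [hbdef] at hb'mem; exact hb'mem)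
    have : Real.cos ϑ * ‖ξ‖ ≤ Real.cos ϑ * (2*lam + sd) :=
      mul_le_mul_of_nonneg_left hnξ hc0
    linarith
  refine ⟨p', Or.inl hcone, ?_⟩
  have hYeq : Y - latt d p = D • nvec := by
    rw [hnvecdef, smul_smul, mul_inv_cancel₀ (ne_of_gt hDpos), one_smul]
  have hdiff : latt d p' - Y = ξ - D • nvec := by
    rw [hξdef, ← hYeq]; abel
  have hsq : ‖latt d p' - Y‖^2 ≤ (D - mu/2)^2 := by
    rw [hdiff, norm_sub_sq_real, real_inner_smul_right, norm_smul, hn, mul_one,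
        Real.norm_eq_abs, abs_of_pos hDpos]
    have h1 : ‖ξ‖^2 ≤ (2*lam + sd)^2 := by nlinarith [norm_nonneg ξ]
    have h2 : (2*lam + sd)^2 ≤ D * mu := by
      rw [← hD0mul]
      exact mul_le_mul_of_nonneg_right hD hmupos.le
    nlinarith [mul_le_mul_of_nonneg_left hinn (by linarith : (0:ℝ) ≤ 2*D)]
  have hfin : ‖latt d p' - Y‖ ≤ D - mu/2 := by
    have h0 : 0 ≤ D - mu/2 := by linarith [le_trans hD0ge hD]
    nlinarith [norm_nonneg (latt d p' - Y)]
  rw [dist_eq_norm]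
  exact hfin

theorem close_lemma (d : ℕ) (ϑ : ℝ) (hϑ0 : 0 < ϑ) (hϑ2 : ϑ ≤ Real.pi / 2)
    (Γ : Config d) (hΓ : Γ.Bounded ϑ) (p z : Fin d → ℤ)
    (hD : dist (latt d p) (latt d z + TTC d ϑ • Γ.axis (latt d z)) ≤ D0C d ϑ) :
    latt d p - latt d z ∈ Γ.cone (latt d z) := by
  obtain ⟨hs2, hc2, hc0, hδ, hc1, hlam, hmu, key1, hD0ge, hD0mul, hT1, key2⟩ :=
    constsFacts d ϑ hϑ0 hϑ2
  have hsd : 0 ≤ sdC d := Real.sqrt_nonneg _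
  set D0 := D0C d ϑ
  set T := TTC d ϑ
  have hmupos : 0 < muC d ϑ := by linarith
  have hD0pos : 0 < D0 := lt_of_lt_of_le hmupos hD0ge
  set a := Γ.axis (latt d z) with hadef
  have ha : ‖a‖ = 1 := Γ.axis_norm _
  set Y := latt d z + T • a with hYdef
  set ξ := latt d p - latt d z with hξdef
  have hξ : ξ = T • a + (latt d p - Y) := by rw [hξdef, hYdef]; abel
  have hpY : ‖latt d p - Y‖ ≤ D0 := by rw [← dist_eq_norm]; exact hD
  have haa : (inner ℝ a a : ℝ) = 1 := by
    rw [real_inner_self_eq_norm_mul_norm, ha]; ring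
  have hin : T - D0 ≤ (inner ℝ a ξ : ℝ) := by
    rw [hξ, inner_add_right, real_inner_smul_right, haa]
    have h1 : -(‖a‖ * ‖latt d p - Y‖) ≤ (inner ℝ a (latt d p - Y) : ℝ) :=
      neg_le_of_abs_le (abs_real_inner_le_norm _ _)
    rw [ha, one_mul] at h1
    linarith
  have hnξ : ‖ξ‖ ≤ T + D0 := by
    rw [hξ]
    calc ‖T • a + (latt d p - Y)‖ ≤ ‖T • a‖ + ‖latt d p - Y‖ := norm_add_le _ _
      _ ≤ T + D0 := by
          rw [norm_smul, Real.norm_eq_abs, ha, mul_one, abs_of_pos (by linarith : (0:ℝ) < T)]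
          linarith
  apply mem_cone_aux d ϑ hϑ0 hϑ2 Γ hΓ _ _ a (Or.inl hadef)
  have : Real.cos ϑ * ‖ξ‖ ≤ Real.cos ϑ * (T + D0) :=
    mul_le_mul_of_nonneg_left hnξ hc0
  linarith

theorem reach_base (d : ℕ) (ϑ : ℝ) (hϑ0 : 0 < ϑ) (hϑ2 : ϑ ≤ Real.pi / 2)
    (Γ : Config d) (hΓ : Γ.Bounded ϑ) (z p0 : Fin d → ℤ)
    (h : dist (latt d p0) (latt d z + TTC d ϑ • Γ.axis (latt d z)) ≤ D0C d ϑ) :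
    ∃ (N : ℕ) (p : ℕ → Fin d → ℤ), p 0 = p0 ∧ p N = z ∧
      (∀ i < N, adjL d Γ (p i) (p (i+1))) ∧
      ∀ i ≤ N, dist (latt d (p i)) (latt d z + TTC d ϑ • Γ.axis (latt d z)) ≤
        D0C d ϑ + TTC d ϑ := by
  obtain ⟨hs2, hc2, hc0, hδ, hc1, hlam, hmu, key1, hD0ge, hD0mul, hT1, key2⟩ :=
    constsFacts d ϑ hϑ0 hϑ2
  have hsd : 0 ≤ sdC d := Real.sqrt_nonneg _
  have hmupos : 0 < muC d ϑ := by linarith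
  have hD0pos : 0 < D0C d ϑ := lt_of_lt_of_le hmupos hD0ge
  have hTpos : 0 < TTC d ϑ := by linarith
  have hcone := close_lemma d ϑ hϑ0 hϑ2 Γ hΓ p0 z h
  refine ⟨1, fun i => if i = 0 then p0 else z, by simp, by simp, ?_, ?_⟩
  · intro i hi
    interval_cases i
    simp only [if_pos rfl, if_neg (one_ne_zero)]
    exact Or.inr hcone
  · intro i hi
    interval_cases i
    · simpa using le_trans h (by linarith)
    · simp only [if_neg (one_ne_zero)]
      have : dist (latt d z) (latt d z + TTC d ϑ • Γ.axis (latt d z)) = TTC d ϑ := by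
        rw [dist_self_add_right, norm_smul, Real.norm_eq_abs, Γ.axis_norm, mul_one,
          abs_of_pos hTpos]
      rw [this]; linarith

theorem reach_s18 (d : ℕ) (ϑ : ℝ) (hϑ0 : 0 < ϑ) (hϑ2 : ϑ ≤ Real.pi / 2)
    (Γ : Config d) (hΓ : Γ.Bounded ϑ) (z : Fin d → ℤ) :
    ∀ n : ℕ, ∀ p0 : Fin d → ℤ,
      dist (latt d p0) (latt d z + TTC d ϑ • Γ.axis (latt d z)) ≤
        D0C d ϑ + n * (muC d ϑ / 2) →
      ∃ (N : ℕ) (p : ℕ → Fin d → ℤ), p 0 = p0 ∧ p N = z ∧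
        (∀ i < N, adjL d Γ (p i) (p (i+1))) ∧
        ∀ i ≤ N, dist (latt d (p i)) (latt d z + TTC d ϑ • Γ.axis (latt d z)) ≤
          D0C d ϑ + n * (muC d ϑ / 2) + TTC d ϑ := by
  obtain ⟨hs2, hc2, hc0, hδ, hc1, hlam, hmu, key1, hD0ge, hD0mul, hT1, key2⟩ :=
    constsFacts d ϑ hϑ0 hϑ2
  have hsd : 0 ≤ sdC d := Real.sqrt_nonneg _
  have hmupos : 0 < muC d ϑ := by linarith
  intro n
  induction n with
  | zero =>
    intro p0 h
    obtain ⟨N, p, h0, hN, hadj, hbd⟩ := reach_base d ϑ hϑ0 hϑ2 Γ hΓ z p0 (by simpa using h)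
    exact ⟨N, p, h0, hN, hadj, fun i hi => le_trans (hbd i hi) (by simp)⟩
  | succ m ih =>
    intro p0 h
    by_cases hc : dist (latt d p0) (latt d z + TTC d ϑ • Γ.axis (latt d z)) ≤ D0C d ϑ
    · obtain ⟨N, p, h0, hN, hadj, hbd⟩ := reach_base d ϑ hϑ0 hϑ2 Γ hΓ z p0 hc
      refine ⟨N, p, h0, hN, hadj, fun i hi => le_trans (hbd i hi) ?_⟩
      have : (0:ℝ) ≤ (m+1 : ℕ) * (muC d ϑ / 2) := by positivity
      linarith
    · push_neg at hc
      obtain ⟨p1, hadj1, hd1⟩ := step_lemma d ϑ hϑ0 hϑ2 Γ hΓ p0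
        (latt d z + TTC d ϑ • Γ.axis (latt d z)) hc.le
      have h1 : dist (latt d p1) (latt d z + TTC d ϑ • Γ.axis (latt d z)) ≤
          D0C d ϑ + m * (muC d ϑ / 2) := by
        have hcast : ((m+1 : ℕ) : ℝ) = (m : ℝ) + 1 := by push_cast; ring
        rw [hcast] at h
        linarith
      obtain ⟨N, p, h0, hN, hadj, hbd⟩ := ih p1 h1
      set q : ℕ → Fin d → ℤ := fun i => if i = 0 then p0 else p (i-1) with hqdef
      have hq0 : q 0 = p0 := by simp [hqdef]
      have hqs : ∀ j : ℕ, q (j+1) = p j := by intro j; simp [hqdef]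
      have hcast : ((m+1 : ℕ) : ℝ) = (m : ℝ) + 1 := by push_cast; ring
      have hT0 : (0:ℝ) < TTC d ϑ := by linarith
      refine ⟨N+1, q, hq0, ?_, ?_, ?_⟩
      · rw [hqs N, hN]
      · intro i hi
        match i with
        | 0 => rw [hq0, hqs 0, h0]; exact hadj1
        | j+1 =>
          rw [hqs j, hqs (j+1)]
          exact hadj j (by omega)
      · intro i hi
        match i with
        | 0 =>
          rw [hq0, hcast]
          rw [hcast] at h
          linarith
        | j+1 =>
          rw [hqs j]
          have := hbd j (by omega)
          rw [hcast]
          linarith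

/-- Corollary 5.8: for every `r > 0` there is `R ≥ r`, depending only on
`r`, `ϑ` and `d`, such that for every `ϑ`-bounded configuration every lattice point is
`r`-`R`-connected. -/
theorem stmt18 (d : ℕ) (hd : 1 ≤ d) (ϑ : ℝ) (hϑ : ϑ ∈ Set.Ioc 0 (Real.pi / 2))
    (r : ℝ) (hr : 0 < r) :
    ∃ R : ℝ, r ≤ R ∧ ∀ Γ : Config d, Γ.Bounded ϑ →
      ∀ x : Fin d → ℤ, rRConnected d Γ r R x := by
  obtain ⟨hϑ0, hϑ2⟩ := hϑ
  obtain ⟨hs2, hc2, hc0, hδ, hc1, hlam, hmu, key1, hD0ge, hD0mul, hT1, key2⟩ :=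
    constsFacts d ϑ hϑ0 hϑ2
  have hsd : 0 ≤ sdC d := Real.sqrt_nonneg _
  have hmupos : 0 < muC d ϑ := by linarith
  have hD0pos : 0 < D0C d ϑ := lt_of_lt_of_le hmupos hD0ge
  have hTpos : 0 < TTC d ϑ := by linarith
  obtain ⟨n, hn⟩ := exists_nat_ge ((r + TTC d ϑ - D0C d ϑ) / (muC d ϑ / 2))
  have hmu2 : 0 < muC d ϑ / 2 := by linarith
  have hnn : r + TTC d ϑ ≤ D0C d ϑ + n * (muC d ϑ / 2) := by
    have := (div_le_iff₀ hmu2).mp hn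
    linarith
  refine ⟨D0C d ϑ + n * (muC d ϑ / 2) + 2 * TTC d ϑ + r, ?_, ?_⟩
  · have : (0:ℝ) ≤ n * (muC d ϑ / 2) := by positivity
    linarith
  · intro Γ hΓ x y hy
    set Y := latt d y + TTC d ϑ • Γ.axis (latt d y) with hYdef
    have hYz : dist (latt d y) Y = TTC d ϑ := by
      rw [hYdef, dist_self_add_right, norm_smul, Real.norm_eq_abs, Γ.axis_norm, mul_one,
        abs_of_pos hTpos]
    have hinit : dist (latt d x) Y ≤ D0C d ϑ + n * (muC d ϑ / 2) := by
      calc dist (latt d x) Y ≤ dist (latt d x) (latt d y) + dist (latt d y) Y :=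
            dist_triangle _ _ _
        _ ≤ r + TTC d ϑ := by rw [hYz, dist_comm]; linarith
        _ ≤ _ := hnn
    obtain ⟨N, p, h0, hN, hadj, hbd⟩ := reach_s18 d ϑ hϑ0 hϑ2 Γ hΓ y n x hinit
    refine ⟨N, p, h0, hN, hadj, ?_⟩
    intro i hi
    have h1 := hbd i hi
    have h2 : dist Y (latt d x) ≤ TTC d ϑ + r := by
      calc dist Y (latt d x) ≤ dist Y (latt d y) + dist (latt d y) (latt d x) :=
            dist_triangle _ _ _
        _ ≤ TTC d ϑ + r := by rw [dist_comm Y, hYz]; linarith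
    calc dist (latt d (p i)) (latt d x) ≤ dist (latt d (p i)) Y + dist Y (latt d x) :=
          dist_triangle _ _ _
      _ ≤ _ := by linarith
end
end
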